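/- arXiv:1804.08418 — 3 statements merged into one kernel-verified Lean document; each statement's English description precedes it below -/
import Mathlib

section
/- Let A ∈ ℝ^{m×n}, C ∈ ℝ^{p×n}, and H := max_{J∈S(A;C)} H_J where H_J := max_{y∈{Ax : C_J x ≤ 0}, ‖y‖≤1} min{‖x‖ : Ax = y, C_J x ≤ 0}. Then for all b ∈ ℝ^m, d ∈ ℝ^p such that {x : Ax = b, Cx ≤ d} is nonempty, and all u with Cu ≤ d, dist(u, {x : Ax = b, Cx ≤ d}) ≤ H · ‖Au − b‖. Moreover this bound is tight: if H > 0 then there exist b ∈ ℝ^m, d ∈ ℝ^p with {x : Ax = b, Cx ≤ d} nonempty and u with Cu ≤ d, Au ≠ b, such that dist(u, {x : Ax = b, Cx ≤ d}) = H · ‖Au − b‖. -/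
open Matrix Metric

/-- The set-valued mapping `[A,C,J] : x ↦ (Ax, Cx) + {(0,s) : s_J ≥ 0}` is
relatively surjective: its image is a linear subspace. -/
def RelSurjAC {m p n : ℕ} (A : Matrix (Fin m) (Fin n) ℝ)
    (C : Matrix (Fin p) (Fin n) ℝ) (J : Set (Fin p)) : Prop :=
  ∃ W : Submodule ℝ ((Fin m → ℝ) × (Fin p → ℝ)),
    {q : (Fin m → ℝ) × (Fin p → ℝ) | ∃ x : Fin n → ℝ, ∃ s : Fin p → ℝ,
      (∀ i ∈ J, 0 ≤ s i) ∧ q = (A.mulVec x, C.mulVec x + s)} =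
    (W : Set ((Fin m → ℝ) × (Fin p → ℝ)))

/-- `H_J = max_{y ∈ {Ax : C_J x ≤ 0}, ‖y‖≤1} min{‖x‖ : Ax = y, C_J x ≤ 0}`. -/
noncomputable def HJstd {m p n : ℕ} (A : Matrix (Fin m) (Fin n) ℝ)
    (C : Matrix (Fin p) (Fin n) ℝ) (J : Set (Fin p)) : ℝ :=
  sSup {t | ∃ y : Fin m → ℝ,
    (∃ x : Fin n → ℝ, (∀ i ∈ J, C.mulVec x i ≤ 0) ∧ y = A.mulVec x) ∧ ‖y‖ ≤ 1 ∧
    t = sInf {r | ∃ x : Fin n → ℝ, A.mulVec x = y ∧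
      (∀ i ∈ J, C.mulVec x i ≤ 0) ∧ r = ‖x‖}}

/-- `H = max_{J ∈ S(A;C)} H_J`. -/
noncomputable def HoffStd {m p n : ℕ} (A : Matrix (Fin m) (Fin n) ℝ)
    (C : Matrix (Fin p) (Fin n) ℝ) : ℝ :=
  sSup {t | ∃ J : Set (Fin p), RelSurjAC A C J ∧ t = HJstd A C J}

namespace HoffmanAux

variable {m p n : ℕ}

/-! ### Generic helpers -/

lemma mulVec_continuous (A : Matrix (Fin m) (Fin n) ℝ) :
    Continuous (fun x : Fin n → ℝ => A.mulVec x) := by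
  have : (fun x : Fin n → ℝ => A.mulVec x) = fun x => A.mulVecLin x := by
    funext x; simp [Matrix.mulVecLin_apply]
  rw [this]
  exact A.mulVecLin.continuous_of_finiteDimensional

/-- minimum-norm element of a closed nonempty set in `ℝⁿ`. -/
lemma min_norm_exists (S : Set (Fin n → ℝ)) (hcl : IsClosed S) (hne : S.Nonempty) :
    ∃ z ∈ S, ∀ z' ∈ S, ‖z‖ ≤ ‖z'‖ := by
  obtain ⟨z₀, hz₀⟩ := hne
  have hcomp : IsCompact (S ∩ Metric.closedBall 0 ‖z₀‖) :=
    (isCompact_closedBall 0 ‖z₀‖).inter_left hcl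
  have hne' : (S ∩ Metric.closedBall 0 ‖z₀‖).Nonempty :=
    ⟨z₀, hz₀, by simp [Metric.mem_closedBall, dist_zero_right]⟩
  obtain ⟨z, hz, hmin⟩ := hcomp.exists_isMinOn hne' continuous_norm.continuousOn
  refine ⟨z, hz.1, fun z' hz' => ?_⟩
  by_cases h : z' ∈ Metric.closedBall 0 ‖z₀‖
  · exact hmin ⟨hz', h⟩
  · have h1 : ‖z₀‖ < ‖z'‖ := by
      have := h
      simp only [Metric.mem_closedBall, dist_zero_right, not_le] at this
      exact this
    have h2 : ‖z‖ ≤ ‖z₀‖ := hmin ⟨hz₀, by simp [Metric.mem_closedBall, dist_zero_right]⟩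
    linarith

/-- Minimal subset with a property. -/
lemma exists_minimal_finset (P : Finset (Fin p) → Prop) (J : Finset (Fin p)) (hJ : P J) :
    ∃ J' ⊆ J, P J' ∧ ∀ i ∈ J', ¬ P (J'.erase i) := by
  classical
  revert hJ
  induction J using Finset.strongInductionOn with
  | _ J ih =>
    intro hJ
    by_cases h : ∃ i ∈ J, P (J.erase i)
    · obtain ⟨i, hi, hPi⟩ := h
      obtain ⟨J', hsub, hP', hmin⟩ := ih (J.erase i) (Finset.erase_ssubset hi) hPi
      exact ⟨J', hsub.trans (Finset.erase_subset _ _), hP', hmin⟩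
    · push_neg at h
      exact ⟨J, Finset.Subset.refl J, hJ, h⟩

lemma clm_pi_repr {k : ℕ} (f : (Fin k → ℝ) →L[ℝ] ℝ) (w : Fin k → ℝ) :
    f w = ∑ j, w j * f (Pi.single j 1) := by
  have hw : w = ∑ j, w j • (Pi.single j 1 : Fin k → ℝ) := by
    funext j'
    rw [Finset.sum_apply]
    simp [Pi.single_apply, Finset.sum_ite_eq]
  conv_lhs => rw [hw]
  rw [map_sum]
  exact Finset.sum_congr rfl fun j _ => by rw [_root_.map_smul, smul_eq_mul]

/-- Gordan-type alternative. -/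
lemma gordan (A : Matrix (Fin m) (Fin n) ℝ) (C : Matrix (Fin p) (Fin n) ℝ)
    (J : Finset (Fin p))
    (h : ¬ ∃ x : Fin n → ℝ, A.mulVec x = 0 ∧ ∀ i ∈ J, C.mulVec x i < 0) :
    ∃ lam : Fin p → ℝ, (∀ i, 0 ≤ lam i) ∧ (∀ i, i ∉ J → lam i = 0) ∧
      (∑ i, lam i) = 1 ∧
      ∀ x : Fin n → ℝ, A.mulVec x = 0 → ∑ i, lam i * C.mulVec x i = 0 := by
  classical
  set W := LinearMap.ker A.mulVecLin with hWdef
  set k := Module.finrank ℝ W with hk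
  set bW := Module.finBasis ℝ W with hbW
  set v : Fin p → (Fin k → ℝ) := fun i j => C.mulVec ((bW j : W) : Fin n → ℝ) i with hv
  set Δ : Set (Fin p → ℝ) :=
    {lam | (∀ i, 0 ≤ lam i) ∧ (∀ i, i ∉ J → lam i = 0) ∧ ∑ i, lam i = 1} with hΔ
  set Φ : (Fin p → ℝ) →ₗ[ℝ] (Fin k → ℝ) :=
    { toFun := fun lam j => ∑ i, lam i * v i j
      map_add' := by
        intro a b; funext j
        simp only [Pi.add_apply, add_mul]
        rw [Finset.sum_add_distrib]
      map_smul' := by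
        intro c a; funext j
        simp only [Pi.smul_apply, smul_eq_mul, RingHom.id_apply, Finset.mul_sum]
        congr 1; funext i; ring } with hΦdef
  have hbker : ∀ j : Fin k, A.mulVec ((bW j : W) : Fin n → ℝ) = 0 := by
    intro j
    rw [← Matrix.mulVecLin_apply]
    exact LinearMap.map_coe_ker _ (bW j)
  by_cases hQ : (0 : Fin k → ℝ) ∈ Φ '' Δ
  · obtain ⟨lam, ⟨hpos, hsupp, hsum⟩, hΦ0⟩ := hQ
    refine ⟨lam, hpos, hsupp, hsum, ?_⟩
    intro x hx
    have hxW : x ∈ W := LinearMap.mem_ker.mpr (by simpa [Matrix.mulVecLin_apply] using hx)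
    set ξ : Fin k → ℝ := fun j => bW.repr ⟨x, hxW⟩ j with hξ
    have hxsum : x = ∑ j, ξ j • ((bW j : W) : Fin n → ℝ) := by
      have h1 : (⟨x, hxW⟩ : W) = ∑ j, ξ j • bW j := (bW.sum_repr ⟨x, hxW⟩).symm
      have h2 := congrArg (Subtype.val) h1
      simpa using h2
    have hCx : ∀ i, C.mulVec x i = ∑ j, ξ j * v i j := by
      intro i
      conv_lhs => rw [hxsum]
      have : C.mulVec (∑ j, ξ j • ((bW j : W) : Fin n → ℝ))
          = ∑ j, ξ j • C.mulVec ((bW j : W) : Fin n → ℝ) := by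
        simp only [← Matrix.mulVecLin_apply, map_sum, _root_.map_smul]
      rw [this, Finset.sum_apply]
      simp [hv]
    have hcomm : ∑ i, lam i * C.mulVec x i = ∑ j, ξ j * (∑ i, lam i * v i j) := by
      simp_rw [hCx, Finset.mul_sum]
      rw [Finset.sum_comm]
      congr 1; funext j; congr 1; funext i; ring
    rw [hcomm]
    apply Finset.sum_eq_zero
    intro j _
    have := congrFun hΦ0 j
    simp only [hΦdef, LinearMap.coe_mk, AddHom.coe_mk, Pi.zero_apply] at this
    rw [this, mul_zero]
  · exfalso
    have hΔconv : Convex ℝ Δ := by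
      intro a ha b hb α β hα hβ hαβ
      refine ⟨fun i => add_nonneg (mul_nonneg hα (ha.1 i)) (mul_nonneg hβ (hb.1 i)),
        fun i hi => by simp [ha.2.1 i hi, hb.2.1 i hi], ?_⟩
      simp only [Pi.add_apply, Pi.smul_apply, smul_eq_mul]
      rw [Finset.sum_add_distrib, ← Finset.mul_sum, ← Finset.mul_sum, ha.2.2, hb.2.2]
      simpa using hαβ
    have hΔsub : Δ ⊆ Metric.closedBall 0 1 := by
      intro lam hlam
      simp only [Metric.mem_closedBall, dist_zero_right]
      rw [pi_norm_le_iff_of_nonneg (by norm_num : (0:ℝ) ≤ 1)]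
      intro i
      rw [Real.norm_eq_abs, abs_of_nonneg (hlam.1 i)]
      rw [← hlam.2.2]
      exact Finset.single_le_sum (fun j _ => hlam.1 j) (Finset.mem_univ i)
    have hΔclosed : IsClosed Δ := by
      have h1 : IsClosed {lam : Fin p → ℝ | ∀ i, 0 ≤ lam i} := by
        have he : {lam : Fin p → ℝ | ∀ i, 0 ≤ lam i} =
            ⋂ i, {lam : Fin p → ℝ | 0 ≤ lam i} := by
          ext lam; simp [Set.mem_iInter]
        rw [he]
        exact isClosed_iInter fun i => isClosed_le continuous_const (continuous_apply i)
      have h2 : IsClosed {lam : Fin p → ℝ | ∀ i, i ∉ J → lam i = 0} := by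
        have he : {lam : Fin p → ℝ | ∀ i, i ∉ J → lam i = 0} =
            ⋂ i, {lam : Fin p → ℝ | i ∉ J → lam i = 0} := by
          ext lam; simp [Set.mem_iInter]
        rw [he]
        refine isClosed_iInter fun i => ?_
        by_cases hi : i ∈ J
        · have he2 : {lam : Fin p → ℝ | i ∉ J → lam i = 0} = Set.univ := by
            ext lam; simp [hi]
          rw [he2]; exact isClosed_univ
        · have he2 : {lam : Fin p → ℝ | i ∉ J → lam i = 0} = {lam | lam i = 0} := by
            ext lam; simp [hi]
          rw [he2]; exact isClosed_eq (continuous_apply i) continuous_const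
      have h3 : IsClosed {lam : Fin p → ℝ | ∑ i, lam i = 1} :=
        isClosed_eq (continuous_finset_sum Finset.univ fun i _ => continuous_apply i)
          continuous_const
      have he : Δ = {lam : Fin p → ℝ | ∀ i, 0 ≤ lam i} ∩
          ({lam : Fin p → ℝ | ∀ i, i ∉ J → lam i = 0} ∩ {lam : Fin p → ℝ | ∑ i, lam i = 1}) := by
        ext lam
        simp only [hΔ, Set.mem_setOf_eq, Set.mem_inter_iff]
      rw [he]
      exact h1.inter (h2.inter h3)
    have hΔcomp : IsCompact Δ :=
      (isCompact_closedBall (0 : Fin p → ℝ) 1).of_isClosed_subset hΔclosed hΔsub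
    have hQconv : Convex ℝ (Φ '' Δ) := hΔconv.linear_image Φ
    have hQcomp : IsCompact (Φ '' Δ) :=
      hΔcomp.image Φ.continuous_of_finiteDimensional
    obtain ⟨f, u, hfu, hu0⟩ := geometric_hahn_banach_closed_point hQconv hQcomp.isClosed hQ
    have hu : u < 0 := by simpa using hu0
    set x : Fin n → ℝ := ∑ j, f (Pi.single j 1) • ((bW j : W) : Fin n → ℝ) with hx
    have hAx : A.mulVec x = 0 := by
      rw [hx]
      have h4 : A.mulVec (∑ j, f (Pi.single j 1) • ((bW j : W) : Fin n → ℝ))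
          = ∑ j, f (Pi.single j 1) • A.mulVec ((bW j : W) : Fin n → ℝ) := by
        simp only [← Matrix.mulVecLin_apply, map_sum, _root_.map_smul]
      rw [h4]
      apply Finset.sum_eq_zero
      intro j _
      rw [hbker j, smul_zero]
    have hfv : ∀ w : Fin k → ℝ, f w = ∑ j, w j * f (Pi.single j 1) :=
      fun w => clm_pi_repr f w
    have hCxval : ∀ i : Fin p, C.mulVec x i = f (v i) := by
      intro i
      rw [hx]
      have h4 : C.mulVec (∑ j, f (Pi.single j 1) • ((bW j : W) : Fin n → ℝ))
          = ∑ j, f (Pi.single j 1) • C.mulVec ((bW j : W) : Fin n → ℝ) := by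
        simp only [← Matrix.mulVecLin_apply, map_sum, _root_.map_smul]
      rw [h4, Finset.sum_apply, hfv (v i)]
      congr 1; funext j
      simp only [Pi.smul_apply, smul_eq_mul, hv]
      ring
    refine h ⟨x, hAx, fun i hi => ?_⟩
    rw [hCxval i]
    have hvQ : v i ∈ Φ '' Δ := by
      refine ⟨Pi.single i 1, ⟨fun i' => ?_, fun i' hi' => ?_, ?_⟩, ?_⟩
      · by_cases hcase : i' = i <;> simp [Pi.single_apply, hcase]
      · have hne : i' ≠ i := fun hh => hi' (hh ▸ hi)
        simp [Pi.single_apply, hne]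
      · simp [Pi.single_apply, Finset.sum_ite_eq]
      · funext j
        simp only [hΦdef, LinearMap.coe_mk, AddHom.coe_mk]
        simp [Pi.single_apply, Finset.sum_ite_eq]
    have := hfu _ hvQ
    linarith


/-- Farkas-type lemma for the matrix `M` appearing in the core lemma. -/
lemma farkas_alpha {k : ℕ} (hk : 0 < k) (M : Fin k → Fin k → ℝ) (lam : Fin k → ℝ)
    (hlam : ∀ j, 0 < lam j)
    (hcol : ∀ i, ∑ j, lam j * M j i = 0)
    (hoff : ∀ i j, j ≠ i → M j i ≤ 0) :
    ∃ α : Fin k → ℝ, (∀ i, 0 ≤ α i) ∧ (∑ i, α i) = 1 ∧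
      ∀ j, ∑ i, M j i * α i ≤ 0 := by
  classical
  by_contra hcon
  push_neg at hcon
  set Δ : Set (Fin k → ℝ) := {α | (∀ i, 0 ≤ α i) ∧ ∑ i, α i = 1} with hΔ
  set Ψ : (Fin k → ℝ) →ₗ[ℝ] (Fin k → ℝ) :=
    { toFun := fun α j => ∑ i, M j i * α i
      map_add' := by
        intro a b; funext j
        simp only [Pi.add_apply, mul_add]
        rw [Finset.sum_add_distrib]
      map_smul' := by
        intro c a; funext j
        simp only [Pi.smul_apply, smul_eq_mul, RingHom.id_apply, Finset.mul_sum]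
        congr 1; funext i; ring } with hΨdef
  set N : Set (Fin k → ℝ) := {w | ∀ j, w j ≤ 0} with hN
  have hdisj : Disjoint (Ψ '' Δ) N := by
    rw [Set.disjoint_left]
    rintro w ⟨α, hα, rfl⟩ hwN
    obtain ⟨j, hj⟩ := hcon α hα.1 hα.2
    have h1 : Ψ α j ≤ 0 := hwN j
    have h2 : Ψ α j = ∑ i, M j i * α i := by
      simp [hΨdef]
    rw [h2] at h1
    linarith
  have hΔconv : Convex ℝ Δ := by
    intro a ha b hb γ β hγ hβ hγβ
    refine ⟨fun i => add_nonneg (mul_nonneg hγ (ha.1 i)) (mul_nonneg hβ (hb.1 i)), ?_⟩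
    simp only [Pi.add_apply, Pi.smul_apply, smul_eq_mul]
    rw [Finset.sum_add_distrib, ← Finset.mul_sum, ← Finset.mul_sum, ha.2, hb.2]
    simpa using hγβ
  have hΔsub : Δ ⊆ Metric.closedBall 0 1 := by
    intro α hα
    simp only [Metric.mem_closedBall, dist_zero_right]
    rw [pi_norm_le_iff_of_nonneg (by norm_num : (0:ℝ) ≤ 1)]
    intro i
    rw [Real.norm_eq_abs, abs_of_nonneg (hα.1 i), ← hα.2]
    exact Finset.single_le_sum (fun j _ => hα.1 j) (Finset.mem_univ i)
  have hΔclosed : IsClosed Δ := by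
    have h1 : IsClosed {α : Fin k → ℝ | ∀ i, 0 ≤ α i} := by
      have he : {α : Fin k → ℝ | ∀ i, 0 ≤ α i} = ⋂ i, {α : Fin k → ℝ | 0 ≤ α i} := by
        ext α; simp [Set.mem_iInter]
      rw [he]
      exact isClosed_iInter fun i => isClosed_le continuous_const (continuous_apply i)
    have h3 : IsClosed {α : Fin k → ℝ | ∑ i, α i = 1} :=
      isClosed_eq (continuous_finset_sum Finset.univ fun i _ => continuous_apply i)
        continuous_const
    have he : Δ = {α : Fin k → ℝ | ∀ i, 0 ≤ α i} ∩ {α : Fin k → ℝ | ∑ i, α i = 1} := by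
      ext α
      simp only [hΔ, Set.mem_setOf_eq, Set.mem_inter_iff]
    rw [he]
    exact h1.inter h3
  have hΔcomp : IsCompact Δ :=
    (isCompact_closedBall (0 : Fin k → ℝ) 1).of_isClosed_subset hΔclosed hΔsub
  have hQconv : Convex ℝ (Ψ '' Δ) := hΔconv.linear_image Ψ
  have hQcomp : IsCompact (Ψ '' Δ) := hΔcomp.image Ψ.continuous_of_finiteDimensional
  have hNconv : Convex ℝ N := by
    intro a ha b hb γ β hγ hβ _
    intro j
    simp only [Pi.add_apply, Pi.smul_apply, smul_eq_mul]
    have := ha j; have := hb j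
    nlinarith
  have hNclosed : IsClosed N := by
    have he : N = ⋂ j, {w : Fin k → ℝ | w j ≤ 0} := by
      ext w; simp [hN, Set.mem_iInter]
    rw [he]
    exact isClosed_iInter fun j => isClosed_le (continuous_apply j) continuous_const
  obtain ⟨f, u, u', hfQ, huu', hfN⟩ :=
    geometric_hahn_banach_compact_closed hQconv hQcomp hNconv hNclosed hdisj
  have hu'0 : u' < 0 := by
    have h0N : (0 : Fin k → ℝ) ∈ N := fun j => le_refl 0
    have := hfN 0 h0N
    simpa using this
  set β : Fin k → ℝ := fun j => -(f (Pi.single j 1)) with hβ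
  have hβ0 : ∀ j, 0 ≤ β j := by
    intro j
    by_contra hneg
    push_neg at hneg
    have hfj : 0 < f (Pi.single j 1) := by simp only [hβ] at hneg; linarith
    have hfne : f (Pi.single j 1) ≠ 0 := ne_of_gt hfj
    set c : ℝ := (1 - u') / (f (Pi.single j 1)) with hc
    have hc0 : 0 ≤ c := div_nonneg (by linarith) (le_of_lt hfj)
    have hmemN : c • (-(Pi.single j 1) : Fin k → ℝ) ∈ N := by
      intro j'
      simp only [Pi.smul_apply, Pi.neg_apply, smul_eq_mul]
      by_cases hcase : j' = j <;>
        simp [Pi.single_apply, hcase] <;> positivity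
    have hlt := hfN _ hmemN
    have hval : f (c • (-(Pi.single j 1) : Fin k → ℝ)) = u' - 1 := by
      rw [_root_.map_smul, map_neg, smul_eq_mul, hc]
      field_simp
      ring
    rw [hval] at hlt
    linarith
  have hcolQ : ∀ i, (0:ℝ) < ∑ j, β j * M j i := by
    intro i
    have hmem : Ψ (Pi.single i 1) ∈ Ψ '' Δ := by
      refine ⟨Pi.single i 1, ⟨fun i' => ?_, ?_⟩, rfl⟩
      · by_cases hcase : i' = i <;> simp [Pi.single_apply, hcase]
      · simp [Pi.single_apply, Finset.sum_ite_eq]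
    have hflt := hfQ _ hmem
    have hval : Ψ (Pi.single i 1) = fun j => M j i := by
      funext j
      simp only [hΨdef, LinearMap.coe_mk, AddHom.coe_mk]
      simp [Pi.single_apply, Finset.sum_ite_eq']
    rw [hval] at hflt
    have hrepr := clm_pi_repr f (fun j => M j i)
    have : ∑ j, M j i * f (Pi.single j 1) < u := hrepr ▸ hflt
    have hsum : ∑ j, β j * M j i = -(∑ j, M j i * f (Pi.single j 1)) := by
      rw [← Finset.sum_neg_distrib]
      exact Finset.sum_congr rfl fun j _ => by simp [hβ]; ring
    rw [hsum]
    linarith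
  have hnetriv : (Finset.univ : Finset (Fin k)).Nonempty := ⟨⟨0, hk⟩, Finset.mem_univ _⟩
  obtain ⟨i0, _, hmin⟩ := Finset.exists_min_image Finset.univ (fun j => β j / lam j) hnetriv
  set ρ : ℝ := β i0 / lam i0 with hρ
  have hterm : ∀ j, β j * M j i0 ≤ ρ * (lam j * M j i0) := by
    intro j
    rcases eq_or_ne j i0 with rfl | hne
    · have hβρ : ρ * lam j = β j := by
        rw [hρ, div_mul_cancel₀ _ (ne_of_gt (hlam j))]
      exact le_of_eq (by rw [← hβρ]; ring)
    · have h1 : ρ ≤ β j / lam j := hmin j (Finset.mem_univ j)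
      have h2 : ρ * lam j ≤ β j := (le_div_iff₀ (hlam j)).mp h1
      have h3 : M j i0 ≤ 0 := hoff i0 j hne
      have := mul_le_mul_of_nonpos_right h2 h3
      calc β j * M j i0 ≤ ρ * lam j * M j i0 := this
        _ = ρ * (lam j * M j i0) := by ring
  have hle : ∑ j, β j * M j i0 ≤ 0 := by
    calc ∑ j, β j * M j i0 ≤ ∑ j, ρ * (lam j * M j i0) := Finset.sum_le_sum fun j _ => hterm j
      _ = ρ * ∑ j, lam j * M j i0 := by rw [Finset.mul_sum]
      _ = 0 := by rw [hcol i0, mul_zero]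
  exact absurd (hcolQ i0) (not_lt.mpr hle)

/-! ### Slater / relative surjectivity -/

lemma relSurj_of_slater (A : Matrix (Fin m) (Fin n) ℝ) (C : Matrix (Fin p) (Fin n) ℝ)
    (J : Set (Fin p)) (x₀ : Fin n → ℝ) (h0 : A.mulVec x₀ = 0)
    (hs : ∀ i ∈ J, C.mulVec x₀ i ≤ -1) : RelSurjAC A C J := by
  classical
  set S : Set ((Fin m → ℝ) × (Fin p → ℝ)) := {q : (Fin m → ℝ) × (Fin p → ℝ) |
    ∃ x : Fin n → ℝ, ∃ s : Fin p → ℝ,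
      (∀ i ∈ J, 0 ≤ s i) ∧ q = (A.mulVec x, C.mulVec x + s)} with hSdef
  have zero_mem : (0 : (Fin m → ℝ) × (Fin p → ℝ)) ∈ S :=
    ⟨0, 0, fun i _ => le_refl 0, by simp [Matrix.mulVec_zero]; rfl⟩
  refine ⟨{ carrier := S, zero_mem' := zero_mem, add_mem' := ?_, smul_mem' := ?_ }, rfl⟩
  · rintro q q' ⟨x, s, hs1, rfl⟩ ⟨x', s', hs2, rfl⟩
    refine ⟨x + x', s + s', fun i hi => add_nonneg (hs1 i hi) (hs2 i hi), ?_⟩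
    simp only [Prod.mk_add_mk, Matrix.mulVec_add, Prod.mk.injEq]
    refine ⟨trivial, ?_⟩
    funext j; simp [Pi.add_apply]; ring
  · rintro c q ⟨x, s, hs1, rfl⟩
    rcases le_or_gt 0 c with hc | hc
    · refine ⟨c • x, c • s, fun i hi => mul_nonneg hc (hs1 i hi), ?_⟩
      simp only [Prod.smul_mk, Matrix.mulVec_smul, Prod.mk.injEq]
      exact ⟨trivial, by rw [smul_add]⟩
    · set B : ℝ := ∑ j ∈ (J.toFinite.toFinset), s j with hB
      have hBs : ∀ i ∈ J, s i ≤ B := by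
        intro i hi
        apply Finset.single_le_sum (f := fun j => s j)
        · intro j hj
          exact hs1 j (by simpa using hj)
        · simpa using hi
      have hB0 : 0 ≤ B := Finset.sum_nonneg fun j hj => hs1 j (by simpa using hj)
      set τ : ℝ := (-c) * B with hτ
      have hτ0 : 0 ≤ τ := mul_nonneg (by linarith) hB0
      refine ⟨c • x + τ • x₀, c • s - τ • (C.mulVec x₀), ?_, ?_⟩
      · intro i hi
        have h1 : -(τ * C.mulVec x₀ i) ≥ τ := by
          have := hs i hi
          nlinarith
        have h2 : c * s i + τ ≥ 0 := by
          have := hBs i hi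
          have : (-c) * B ≥ (-c) * s i := by nlinarith
          simp only [hτ]; nlinarith
        simp only [Pi.sub_apply, Pi.smul_apply, smul_eq_mul]
        nlinarith
      · simp only [Matrix.mulVec_add, Matrix.mulVec_smul, h0, smul_zero, add_zero,
          Prod.smul_mk, Prod.mk.injEq]
        refine ⟨trivial, ?_⟩
        funext j
        simp only [Pi.add_apply, Pi.sub_apply, Pi.smul_apply, smul_eq_mul]
        ring

lemma slater_of_relSurj (A : Matrix (Fin m) (Fin n) ℝ) (C : Matrix (Fin p) (Fin n) ℝ)
    (J : Set (Fin p)) (h : RelSurjAC A C J) :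
    ∃ x₀ : Fin n → ℝ, A.mulVec x₀ = 0 ∧ ∀ i ∈ J, C.mulVec x₀ i ≤ -1 := by
  classical
  obtain ⟨W, hW⟩ := h
  have hmem : ∀ i ∈ J, ∃ x : Fin n → ℝ, A.mulVec x = 0 ∧
      ∀ j ∈ J, C.mulVec x j ≤ -((Pi.single i (1:ℝ) : Fin p → ℝ) j) := by
    intro i hi
    have h1 : ((0 : Fin m → ℝ), (Pi.single i (1:ℝ) : Fin p → ℝ)) ∈ (W : Set _) := by
      rw [← hW]
      refine ⟨0, (Pi.single i (1:ℝ) : Fin p → ℝ), ?_, by simp [Matrix.mulVec_zero]⟩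
      intro j _
      rcases eq_or_ne j i with rfl | hne
      · simp
      · simp [Pi.single_apply, hne.symm]
    have h2 : ((0 : Fin m → ℝ), -(Pi.single i (1:ℝ) : Fin p → ℝ)) ∈ (W : Set _) := by
      have := W.neg_mem h1
      simpa using this
    rw [← hW] at h2
    obtain ⟨x, s, hsn, hq⟩ := h2
    have hA : A.mulVec x = 0 := by
      have := congrArg Prod.fst hq
      simpa using this.symm
    have hC : C.mulVec x + s = -(Pi.single i (1:ℝ) : Fin p → ℝ) := by
      have := congrArg Prod.snd hq
      simpa using this.symm
    refine ⟨x, hA, fun j hj => ?_⟩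
    have := congrFun hC j
    have hsj := hsn j hj
    simp only [Pi.add_apply, Pi.neg_apply] at this
    linarith
  choose! xf hxf1 hxf2 using hmem
  set Jfin := J.toFinite.toFinset with hJfin
  refine ⟨∑ i ∈ Jfin, xf i, ?_, ?_⟩
  · have : A.mulVec (∑ i ∈ Jfin, xf i) = ∑ i ∈ Jfin, A.mulVec (xf i) := by
      simp only [← Matrix.mulVecLin_apply, map_sum]
    rw [this]
    apply Finset.sum_eq_zero
    intro i hi
    exact hxf1 i (by simpa [hJfin] using hi)
  · intro j hj
    have hCsum : C.mulVec (∑ i ∈ Jfin, xf i) = ∑ i ∈ Jfin, C.mulVec (xf i) := by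
      simp only [← Matrix.mulVecLin_apply, map_sum]
    rw [hCsum]
    rw [Finset.sum_apply]
    have hle : ∀ i ∈ Jfin, C.mulVec (xf i) j ≤ -((Pi.single i (1:ℝ) : Fin p → ℝ) j) :=
      fun i hi => hxf2 i (by simpa [hJfin] using hi) j hj
    calc ∑ i ∈ Jfin, C.mulVec (xf i) j ≤ ∑ i ∈ Jfin, -((Pi.single i (1:ℝ) : Fin p → ℝ) j) :=
          Finset.sum_le_sum hle
      _ = -(∑ i ∈ Jfin, (Pi.single i (1:ℝ) : Fin p → ℝ) j) := by rw [← Finset.sum_neg_distrib]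
      _ = -1 := by
          have : ∑ i ∈ Jfin, (Pi.single i (1:ℝ) : Fin p → ℝ) j = 1 := by
            rw [Finset.sum_eq_single j]
            · simp
            · intro i _ hne; simp [Pi.single_apply, hne]
            · intro hj2
              exact absurd (by simpa [hJfin] using hj) hj2
          rw [this]

/-- strict Slater (scaling). -/
lemma slater_scale (A : Matrix (Fin m) (Fin n) ℝ) (C : Matrix (Fin p) (Fin n) ℝ)
    (J : Finset (Fin p)) (x₀ : Fin n → ℝ) (h0 : A.mulVec x₀ = 0)
    (hs : ∀ i ∈ J, C.mulVec x₀ i < 0) :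
    ∃ x₁ : Fin n → ℝ, A.mulVec x₁ = 0 ∧ ∀ i ∈ (J : Set (Fin p)), C.mulVec x₁ i ≤ -1 := by
  classical
  rcases J.eq_empty_or_nonempty with rfl | hne
  · exact ⟨0, Matrix.mulVec_zero A, by simp⟩
  · set δ : ℝ := J.inf' hne (fun i => -(C.mulVec x₀ i)) with hδ
    have hδ0 : 0 < δ := by
      rw [hδ, Finset.lt_inf'_iff]
      intro i hi
      have := hs i hi
      linarith
    refine ⟨δ⁻¹ • x₀, by rw [Matrix.mulVec_smul, h0, smul_zero], ?_⟩
    intro i hi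
    have hi' : i ∈ J := hi
    have h1 : δ ≤ -(C.mulVec x₀ i) := Finset.inf'_le _ hi'
    have h2 : C.mulVec (δ⁻¹ • x₀) i = δ⁻¹ * C.mulVec x₀ i := by
      rw [Matrix.mulVec_smul]; simp
    rw [h2]
    have hδinv : 0 < δ⁻¹ := inv_pos.mpr hδ0
    have h3 : C.mulVec x₀ i ≤ -δ := by linarith
    calc δ⁻¹ * C.mulVec x₀ i ≤ δ⁻¹ * (-δ) :=
          mul_le_mul_of_nonneg_left h3 (le_of_lt hδinv)
      _ = -1 := by field_simp

/-- Key quantitative consequence of Slater: bounded selection. -/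
lemma bound_of_slater (A : Matrix (Fin m) (Fin n) ℝ) (C : Matrix (Fin p) (Fin n) ℝ)
    (J : Set (Fin p)) (x₀ : Fin n → ℝ) (h0 : A.mulVec x₀ = 0)
    (hs : ∀ i ∈ J, C.mulVec x₀ i ≤ -1) :
    ∃ M : ℝ, 0 ≤ M ∧ ∀ y : Fin m → ℝ, (∃ x, A.mulVec x = y) →
      ∃ x, A.mulVec x = y ∧ (∀ i ∈ J, C.mulVec x i ≤ 0) ∧ ‖x‖ ≤ M * ‖y‖ := by
  classical
  set Al := A.mulVecLin with hAl
  set Cl := C.mulVecLin.toContinuousLinearMap with hCl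
  have hCb : ∀ (x : Fin n → ℝ) (i : Fin p), C.mulVec x i ≤ ‖Cl‖ * ‖x‖ := by
    intro x i
    have h1 : |C.mulVec x i| ≤ ‖C.mulVec x‖ := by
      have := norm_le_pi_norm (C.mulVec x) i
      simpa [Real.norm_eq_abs] using this
    have h2 : ‖C.mulVec x‖ = ‖Cl x‖ := by
      simp [hCl, Matrix.mulVecLin_apply]
    have h3 : ‖Cl x‖ ≤ ‖Cl‖ * ‖x‖ := Cl.le_opNorm x
    calc C.mulVec x i ≤ |C.mulVec x i| := le_abs_self _
      _ ≤ ‖Cl‖ * ‖x‖ := by rw [h2] at h1; linarith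
  obtain ⟨B, hB⟩ := Al.rangeRestrict.exists_rightInverse_of_surjective
      (LinearMap.range_rangeRestrict Al)
  set Bc := B.toContinuousLinearMap with hBc
  refine ⟨‖Bc‖ * (1 + ‖Cl‖ * ‖x₀‖), by positivity, ?_⟩
  rintro y ⟨x, hx⟩
  have hy : y ∈ LinearMap.range Al := ⟨x, by simp [hAl, Matrix.mulVecLin_apply, hx]⟩
  set w : Fin n → ℝ := B ⟨y, hy⟩ with hw
  have hAw : A.mulVec w = y := by
    have h1 : Al.rangeRestrict (B ⟨y, hy⟩) = ⟨y, hy⟩ := LinearMap.congr_fun hB ⟨y, hy⟩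
    have h2 := congrArg (Subtype.val) h1
    simpa [hAl, Matrix.mulVecLin_apply] using h2
  have hwn : ‖w‖ ≤ ‖Bc‖ * ‖y‖ := by
    have h1 : ‖Bc ⟨y, hy⟩‖ ≤ ‖Bc‖ * ‖(⟨y, hy⟩ : LinearMap.range Al)‖ := Bc.le_opNorm _
    have h2 : ‖(⟨y, hy⟩ : LinearMap.range Al)‖ = ‖y‖ := rfl
    have h3 : Bc ⟨y, hy⟩ = w := rfl
    rw [h2, h3] at h1
    exact h1
  set τ : ℝ := ‖Cl‖ * ‖w‖ with hτ
  have hτ0 : 0 ≤ τ := by positivity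
  refine ⟨w + τ • x₀, ?_, ?_, ?_⟩
  · rw [Matrix.mulVec_add, Matrix.mulVec_smul, h0, smul_zero, add_zero, hAw]
  · intro i hi
    have h1 : C.mulVec (w + τ • x₀) i = C.mulVec w i + τ * C.mulVec x₀ i := by
      rw [Matrix.mulVec_add, Matrix.mulVec_smul]
      simp
    rw [h1]
    have h2 := hCb w i
    have h3 := hs i hi
    have h4 : τ * C.mulVec x₀ i ≤ τ * (-1) := mul_le_mul_of_nonneg_left h3 hτ0
    linarith
  · have h1 : ‖w + τ • x₀‖ ≤ ‖w‖ + τ * ‖x₀‖ := by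
      calc ‖w + τ • x₀‖ ≤ ‖w‖ + ‖τ • x₀‖ := norm_add_le _ _
        _ = ‖w‖ + τ * ‖x₀‖ := by rw [norm_smul, Real.norm_eq_abs, abs_of_nonneg hτ0]
    have h4 : ‖w‖ + τ * ‖x₀‖ = ‖w‖ * (1 + ‖Cl‖ * ‖x₀‖) := by rw [hτ]; ring
    have h5 : ‖w‖ * (1 + ‖Cl‖ * ‖x₀‖) ≤ (‖Bc‖ * ‖y‖) * (1 + ‖Cl‖ * ‖x₀‖) :=
      mul_le_mul_of_nonneg_right hwn (by positivity)
    calc ‖w + τ • x₀‖ ≤ ‖w‖ + τ * ‖x₀‖ := h1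
      _ = ‖w‖ * (1 + ‖Cl‖ * ‖x₀‖) := h4
      _ ≤ (‖Bc‖ * ‖y‖) * (1 + ‖Cl‖ * ‖x₀‖) := h5
      _ = ‖Bc‖ * (1 + ‖Cl‖ * ‖x₀‖) * ‖y‖ := by ring

/-! ### HJstd facts -/

lemma hJstd_bddAbove (A : Matrix (Fin m) (Fin n) ℝ) (C : Matrix (Fin p) (Fin n) ℝ)
    (J : Set (Fin p)) (x₀ : Fin n → ℝ) (h0 : A.mulVec x₀ = 0)
    (hs : ∀ i ∈ J, C.mulVec x₀ i ≤ -1) :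
    BddAbove {t | ∃ y : Fin m → ℝ,
      (∃ x : Fin n → ℝ, (∀ i ∈ J, C.mulVec x i ≤ 0) ∧ y = A.mulVec x) ∧ ‖y‖ ≤ 1 ∧
      t = sInf {r | ∃ x : Fin n → ℝ, A.mulVec x = y ∧
        (∀ i ∈ J, C.mulVec x i ≤ 0) ∧ r = ‖x‖}} := by
  obtain ⟨M, hM0, hMx⟩ := bound_of_slater A C J x₀ h0 hs
  refine ⟨M, ?_⟩
  rintro t ⟨y, ⟨xw, hxwC, hyeq⟩, hy1, rfl⟩
  obtain ⟨x', hx'A, hx'C, hx'n⟩ := hMx y ⟨xw, hyeq.symm⟩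
  have hbdd : BddBelow {r | ∃ x : Fin n → ℝ, A.mulVec x = y ∧
      (∀ i ∈ J, C.mulVec x i ≤ 0) ∧ r = ‖x‖} := by
    refine ⟨0, ?_⟩
    rintro r ⟨x, _, _, rfl⟩
    exact norm_nonneg x
  have h1 : sInf {r | ∃ x : Fin n → ℝ, A.mulVec x = y ∧
      (∀ i ∈ J, C.mulVec x i ≤ 0) ∧ r = ‖x‖} ≤ ‖x'‖ :=
    csInf_le hbdd ⟨x', hx'A, hx'C, rfl⟩
  have h2 : M * ‖y‖ ≤ M * 1 := mul_le_mul_of_nonneg_left hy1 hM0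
  linarith

lemma hoffSet_finite (A : Matrix (Fin m) (Fin n) ℝ) (C : Matrix (Fin p) (Fin n) ℝ) :
    {t | ∃ J : Set (Fin p), RelSurjAC A C J ∧ t = HJstd A C J}.Finite := by
  apply Set.Finite.subset (Set.finite_range (fun J : Set (Fin p) => HJstd A C J))
  rintro t ⟨J, _, rfl⟩; exact ⟨J, rfl⟩

lemma hoffSet_nonempty (A : Matrix (Fin m) (Fin n) ℝ) (C : Matrix (Fin p) (Fin n) ℝ) :
    {t | ∃ J : Set (Fin p), RelSurjAC A C J ∧ t = HJstd A C J}.Nonempty := by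
  refine ⟨HJstd A C ∅, ∅, ?_, rfl⟩
  exact relSurj_of_slater A C ∅ 0 (Matrix.mulVec_zero A) (by simp)

lemma hJstd_le_hoffStd (A : Matrix (Fin m) (Fin n) ℝ) (C : Matrix (Fin p) (Fin n) ℝ)
    (J : Set (Fin p)) (h : RelSurjAC A C J) : HJstd A C J ≤ HoffStd A C :=
  le_csSup ((hoffSet_finite A C).bddAbove) ⟨J, h, rfl⟩

lemma hJstd_nonneg (A : Matrix (Fin m) (Fin n) ℝ) (C : Matrix (Fin p) (Fin n) ℝ)
    (J : Set (Fin p)) (h : RelSurjAC A C J) : 0 ≤ HJstd A C J := by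
  obtain ⟨x₀, h0, hs⟩ := slater_of_relSurj A C J h
  have hbdd := hJstd_bddAbove A C J x₀ h0 hs
  have hinf0 : (0:ℝ) = sInf {r | ∃ x : Fin n → ℝ, A.mulVec x = (0 : Fin m → ℝ) ∧
      (∀ i ∈ J, C.mulVec x i ≤ 0) ∧ r = ‖x‖} := by
    refine le_antisymm ?_ ?_
    · refine le_csInf ⟨0, 0, Matrix.mulVec_zero A, ?_, by simp⟩ ?_
      · intro i _
        simp [Matrix.mulVec_zero]
      · rintro r ⟨x, _, _, rfl⟩
        exact norm_nonneg x
    · refine csInf_le ⟨0, ?_⟩ ⟨0, Matrix.mulVec_zero A, ?_, by simp⟩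
      · rintro r ⟨x, _, _, rfl⟩
        exact norm_nonneg x
      · intro i _
        simp [Matrix.mulVec_zero]
  refine le_csSup hbdd ⟨0, ⟨0, ?_, by simp [Matrix.mulVec_zero]⟩, by simp, hinf0⟩
  intro i _
  simp [Matrix.mulVec_zero]

lemma hoffStd_nonneg (A : Matrix (Fin m) (Fin n) ℝ) (C : Matrix (Fin p) (Fin n) ℝ) :
    0 ≤ HoffStd A C := by
  have hES : RelSurjAC A C ∅ :=
    relSurj_of_slater A C ∅ 0 (Matrix.mulVec_zero A) (by simp)
  exact le_trans (hJstd_nonneg A C ∅ hES) (hJstd_le_hoffStd A C ∅ hES)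

/-! ### The core lemma -/

lemma core_lemma (A : Matrix (Fin m) (Fin n) ℝ) (C : Matrix (Fin p) (Fin n) ℝ)
    (J₀ : Finset (Fin p)) (y : Fin m → ℝ) (hy : y ≠ 0)
    (zbar : Fin n → ℝ) (hzbar : A.mulVec zbar = y ∧ ∀ i ∈ J₀, C.mulVec zbar i ≤ 0) :
    ∃ z : Fin n → ℝ, A.mulVec z = y ∧ (∀ i ∈ J₀, C.mulVec z i ≤ 0) ∧
      ‖z‖ ≤ HoffStd A C * ‖y‖ := by
  classical
  -- the closed feasible set and its minimum-norm element
  set F₀ : Set (Fin n → ℝ) := {z | A.mulVec z = y ∧ ∀ i ∈ J₀, C.mulVec z i ≤ 0} with hF₀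
  have hF₀cl : IsClosed F₀ := by
    have h1 : IsClosed {z : Fin n → ℝ | A.mulVec z = y} :=
      isClosed_eq (mulVec_continuous A) continuous_const
    have h2 : IsClosed {z : Fin n → ℝ | ∀ i ∈ J₀, C.mulVec z i ≤ 0} := by
      have he : {z : Fin n → ℝ | ∀ i ∈ J₀, C.mulVec z i ≤ 0} =
          ⋂ i ∈ J₀, {z : Fin n → ℝ | C.mulVec z i ≤ 0} := by
        ext z; simp [Set.mem_iInter]
      rw [he]
      exact isClosed_biInter fun i _ =>
        isClosed_le ((continuous_apply i).comp (mulVec_continuous C)) continuous_const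
    have he : F₀ = {z : Fin n → ℝ | A.mulVec z = y} ∩
        {z : Fin n → ℝ | ∀ i ∈ J₀, C.mulVec z i ≤ 0} := by
      ext z; simp only [hF₀, Set.mem_setOf_eq, Set.mem_inter_iff]
    rw [he]
    exact h1.inter h2
  obtain ⟨zstar, hzstarF, hzstarmin⟩ := min_norm_exists F₀ hF₀cl ⟨zbar, hzbar⟩
  set r : ℝ := ‖zstar‖ with hrdef
  obtain ⟨J, hJsub, hPJ, hJmin⟩ := exists_minimal_finset
    (fun J' => ∀ z : Fin n → ℝ,
      (A.mulVec z = y ∧ ∀ i ∈ J', C.mulVec z i ≤ 0) → r ≤ ‖z‖) J₀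
    (fun z hz => hzstarmin z hz)
  have hzstarJ : A.mulVec zstar = y ∧ ∀ i ∈ J, C.mulVec zstar i ≤ 0 :=
    ⟨hzstarF.1, fun i hi => hzstarF.2 i (hJsub hi)⟩
  -- points below the minimum for each dropped index
  have hz'ex : ∀ i ∈ J, ∃ z', (A.mulVec z' = y ∧
      ∀ j ∈ J.erase i, C.mulVec z' j ≤ 0) ∧ ‖z'‖ < r := by
    intro i hi
    have := hJmin i hi
    push_neg at this
    obtain ⟨z', hz'1, hz'2⟩ := this
    exact ⟨z', hz'1, hz'2⟩
  choose! z' hz'feas hz'n using hz'ex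
  -- all constraints in J are active at zstar
  have hactive : ∀ j ∈ J, C.mulVec zstar j = 0 := by
    intro j hj
    rcases lt_or_eq_of_le (hzstarJ.2 j hj) with hlt | heq
    · exfalso
      obtain ⟨hz'A, hz'C⟩ := hz'feas j hj
      have hz'r := hz'n j hj
      by_cases hsg : C.mulVec (z' j) j ≤ 0
      · -- z' j satisfies all constraints of J
        have : r ≤ ‖z' j‖ := by
          refine hPJ (z' j) ⟨hz'A, fun i hiJ => ?_⟩
          rcases eq_or_ne i j with rfl | hne
          · exact hsg
          · exact hz'C i (Finset.mem_erase.mpr ⟨hne, hiJ⟩)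
        linarith
      · push_neg at hsg
        set a : ℝ := C.mulVec zstar j with ha
        set sβ : ℝ := C.mulVec (z' j) j with hsβ
        set t : ℝ := (-a) / (2 * (sβ - a)) with htdef
        have hsa : 0 < sβ - a := by simp only [hsβ, ha]; linarith
        have ht0 : 0 < t := by
          apply div_pos
          · simp only [ha]; linarith
          · linarith
        have ht1 : t < 1 := by
          rw [htdef, div_lt_one (by linarith)]
          simp only [ha]
          linarith
        set zt : Fin n → ℝ := (1 - t) • zstar + t • z' j with hzt
        have hAzt : A.mulVec zt = y := by
          rw [hzt, Matrix.mulVec_add, Matrix.mulVec_smul, Matrix.mulVec_smul,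
            hzstarJ.1, hz'A, ← add_smul]
          simp
        have hCzt : ∀ i, C.mulVec zt i = (1 - t) * C.mulVec zstar i
            + t * C.mulVec (z' j) i := by
          intro i
          rw [hzt, Matrix.mulVec_add, Matrix.mulVec_smul, Matrix.mulVec_smul]
          simp
        have hCJzt : ∀ i ∈ J, C.mulVec zt i ≤ 0 := by
          intro i hiJ
          rw [hCzt i]
          rcases eq_or_ne i j with rfl | hne
          · have hval : (1 - t) * C.mulVec zstar i + t * C.mulVec (z' i) i
                = a + t * (sβ - a) := by
              simp only [ha, hsβ]; ring
            rw [hval, htdef]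
            have : -a / (2 * (sβ - a)) * (sβ - a) = -a / 2 := by
              field_simp
            rw [this]
            linarith
          · have h1 : C.mulVec zstar i ≤ 0 := hzstarJ.2 i hiJ
            have h2 : C.mulVec (z' j) i ≤ 0 := hz'C i (Finset.mem_erase.mpr ⟨hne, hiJ⟩)
            nlinarith
        have hnzt : ‖zt‖ < r := by
          calc ‖zt‖ ≤ ‖(1 - t) • zstar‖ + ‖t • z' j‖ := norm_add_le _ _
            _ = (1 - t) * r + t * ‖z' j‖ := by
                rw [norm_smul, norm_smul, Real.norm_eq_abs, Real.norm_eq_abs,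
                  abs_of_nonneg (by linarith : (0:ℝ) ≤ 1 - t), abs_of_nonneg (le_of_lt ht0)]
            _ < (1 - t) * r + t * r := by
                have := hz'n j hj
                exact add_lt_add_of_le_of_lt le_rfl (by nlinarith)
            _ = r := by ring
        have := hPJ zt ⟨hAzt, hCJzt⟩
        linarith
    · exact heq
  -- strict Slater point for J exists
  have hslater : ∃ x₀ : Fin n → ℝ, A.mulVec x₀ = 0 ∧ ∀ i ∈ J, C.mulVec x₀ i < 0 := by
    by_contra hns
    obtain ⟨lam, hlpos, hlsupp, hlsum, hlker⟩ := gordan A C J hns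
    -- the weighted sum of constraints vanishes on {Az = y}
    have hfz : ∀ z : Fin n → ℝ, A.mulVec z = y →
        ∑ i, lam i * C.mulVec z i = 0 := by
      intro z hz
      have hker : A.mulVec (z - zstar) = 0 := by
        rw [Matrix.mulVec_sub, hz, hzstarJ.1, sub_self]
      have h1 := hlker (z - zstar) hker
      have h2 : ∀ i, C.mulVec (z - zstar) i = C.mulVec z i - C.mulVec zstar i := by
        intro i; rw [Matrix.mulVec_sub]; simp
      have h3 : ∑ i, lam i * C.mulVec z i = ∑ i, lam i * C.mulVec zstar i := by
        have h4 : ∑ i, lam i * (C.mulVec z i - C.mulVec zstar i) = 0 := by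
          rw [← h1]
          exact Finset.sum_congr rfl fun i _ => by rw [h2 i]
        have h5 : ∑ i, (lam i * C.mulVec z i - lam i * C.mulVec zstar i) = 0 := by
          rw [← h4]
          exact Finset.sum_congr rfl fun i _ => by ring
        rw [Finset.sum_sub_distrib] at h5
        linarith
      rw [h3]
      apply Finset.sum_eq_zero
      intro i _
      by_cases hiJ : i ∈ J
      · rw [hactive i hiJ, mul_zero]
      · rw [hlsupp i hiJ, zero_mul]
    -- each dropped point strictly violates its own constraint
    have hz'pos : ∀ i ∈ J, 0 < C.mulVec (z' i) i := by
      intro i hi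
      by_contra hle
      push_neg at hle
      have : r ≤ ‖z' i‖ := by
        refine hPJ (z' i) ⟨(hz'feas i hi).1, fun j hjJ => ?_⟩
        rcases eq_or_ne j i with rfl | hne
        · exact hle
        · exact (hz'feas i hi).2 j (Finset.mem_erase.mpr ⟨hne, hjJ⟩)
      have := hz'n i hi
      linarith
    -- the support of lam
    set T : Finset (Fin p) := Finset.univ.filter (fun i => 0 < lam i) with hT
    have hTsubJ : T ⊆ J := by
      intro i hiT
      rw [hT, Finset.mem_filter] at hiT
      by_contra hiJ
      have := hlsupp i hiJ
      linarith [hiT.2]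
    have hTmem : ∀ i, i ∈ T ↔ 0 < lam i := by
      intro i; rw [hT, Finset.mem_filter]; simp
    have hTne : T.Nonempty := by
      by_contra hTe
      rw [Finset.not_nonempty_iff_eq_empty] at hTe
      have : ∑ i, lam i = 0 := by
        apply Finset.sum_eq_zero
        intro i _
        rcases lt_or_eq_of_le (hlpos i) with hlt | heq
        · exfalso
          have : i ∈ T := (hTmem i).mpr hlt
          rw [hTe] at this
          exact absurd this (Finset.notMem_empty i)
        · exact heq.symm
      rw [this] at hlsum
      norm_num at hlsum
    set k : ℕ := T.card with hk
    have hkpos : 0 < k := Finset.card_pos.mpr hTne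
    set e : Fin k ≃ {x // x ∈ T} := T.equivFin.symm with he
    set ι : Fin k → Fin p := fun j => (e j : Fin p) with hι
    have hιT : ∀ j, ι j ∈ T := fun j => (e j).2
    have hιinj : Function.Injective ι := by
      intro a b hab
      exact e.injective (Subtype.ext hab)
    set Mm : Fin k → Fin k → ℝ := fun j i => C.mulVec (z' (ι i)) (ι j) with hMm
    set lam' : Fin k → ℝ := fun j => lam (ι j) with hlam'
    have hlam'pos : ∀ j, 0 < lam' j := fun j => (hTmem (ι j)).mp (hιT j)
    have hcol : ∀ i, ∑ j, lam' j * Mm j i = 0 := by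
      intro i
      have h1 : ∑ j : Fin k, lam' j * Mm j i
          = ∑ q ∈ T, lam q * C.mulVec (z' (ι i)) q := by
        rw [← Finset.sum_coe_sort T (fun q => lam q * C.mulVec (z' (ι i)) q)]
        exact Fintype.sum_equiv e (fun j => lam' j * Mm j i)
          (fun q => lam (q : Fin p) * C.mulVec (z' (ι i)) (q : Fin p))
          (fun j => rfl)
      rw [h1]
      have h2 : ∑ q ∈ T, lam q * C.mulVec (z' (ι i)) q
          = ∑ q, lam q * C.mulVec (z' (ι i)) q := by
        apply Finset.sum_subset (Finset.subset_univ T)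
        intro q _ hqT
        have : lam q = 0 := by
          rcases lt_or_eq_of_le (hlpos q) with hlt | heq
          · exact absurd ((hTmem q).mpr hlt) hqT
          · exact heq.symm
        rw [this, zero_mul]
      rw [h2]
      exact hfz (z' (ι i)) (hz'feas (ι i) (hTsubJ (hιT i))).1
    have hoff : ∀ i j, j ≠ i → Mm j i ≤ 0 := by
      intro i j hne
      have hji : ι j ≠ ι i := fun hcontra => hne (hιinj hcontra)
      exact (hz'feas (ι i) (hTsubJ (hιT i))).2 (ι j)
        (Finset.mem_erase.mpr ⟨hji, hTsubJ (hιT j)⟩)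
    obtain ⟨α, hα0, hα1, hαM⟩ := farkas_alpha hkpos Mm lam' hlam'pos hcol hoff
    set w : Fin n → ℝ := ∑ i, α i • z' (ι i) with hw
    have hAw : A.mulVec w = y := by
      have h1 : A.mulVec w = ∑ i, α i • A.mulVec (z' (ι i)) := by
        rw [hw]
        simp only [← Matrix.mulVecLin_apply, map_sum, _root_.map_smul]
      rw [h1]
      have h2 : ∀ i ∈ Finset.univ, α i • A.mulVec (z' (ι i)) = α i • y := by
        intro i _
        rw [(hz'feas (ι i) (hTsubJ (hιT i))).1]
      rw [Finset.sum_congr rfl h2, ← Finset.sum_smul, hα1, one_smul]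
    have hCw : ∀ q, C.mulVec w q = ∑ i, α i * C.mulVec (z' (ι i)) q := by
      intro q
      have h1 : C.mulVec w = ∑ i, α i • C.mulVec (z' (ι i)) := by
        rw [hw]
        simp only [← Matrix.mulVecLin_apply, map_sum, _root_.map_smul]
      rw [h1, Finset.sum_apply]
      simp
    have hCwJ : ∀ q ∈ J, C.mulVec w q ≤ 0 := by
      intro q hq
      rw [hCw q]
      by_cases hqT : q ∈ T
      · set j₀ : Fin k := e.symm ⟨q, hqT⟩ with hj₀
        have hιj₀ : ι j₀ = q := by
          rw [hι, hj₀]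
          simp
        have := hαM j₀
        have heq : ∑ i, Mm j₀ i * α i = ∑ i, α i * C.mulVec (z' (ι i)) q := by
          refine Finset.sum_congr rfl fun i _ => ?_
          simp only [hMm]
          rw [hιj₀]
          ring
        linarith [heq ▸ this]
      · apply Finset.sum_nonpos
        intro i _
        have hqne : q ≠ ι i := fun hcontra => hqT (hcontra ▸ hιT i)
        have h1 : C.mulVec (z' (ι i)) q ≤ 0 :=
          (hz'feas (ι i) (hTsubJ (hιT i))).2 q (Finset.mem_erase.mpr ⟨hqne, hq⟩)
        exact mul_nonpos_of_nonneg_of_nonpos (hα0 i) h1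
    have hwn : ‖w‖ < r := by
      have h1 : ‖w‖ ≤ ∑ i, α i * ‖z' (ι i)‖ := by
        rw [hw]
        refine le_trans (norm_sum_le _ _) ?_
        apply Finset.sum_le_sum
        intro i _
        rw [norm_smul, Real.norm_eq_abs, abs_of_nonneg (hα0 i)]
      have h2 : ∑ i, α i * ‖z' (ι i)‖ < ∑ i, α i * r := by
        have hex : ∃ i₀, 0 < α i₀ := by
          by_contra hno
          push_neg at hno
          have : ∑ i, α i = 0 := by
            apply Finset.sum_eq_zero
            intro i _
            exact le_antisymm (hno i) (hα0 i)
          rw [this] at hα1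
          norm_num at hα1
        obtain ⟨i₀, hi₀⟩ := hex
        apply Finset.sum_lt_sum
        · intro i _
          exact mul_le_mul_of_nonneg_left
            (le_of_lt (hz'n (ι i) (hTsubJ (hιT i)))) (hα0 i)
        · exact ⟨i₀, Finset.mem_univ i₀,
            mul_lt_mul_of_pos_left (hz'n (ι i₀) (hTsubJ (hιT i₀))) hi₀⟩
      have h3 : ∑ i, α i * r = r := by
        rw [← Finset.sum_mul, hα1, one_mul]
      linarith
    have := hPJ w ⟨hAw, hCwJ⟩
    linarith
  -- conclude the norm bound via `HJstd`
  obtain ⟨x₀, h0, hsl⟩ := hslater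
  obtain ⟨x₁, h1, hs1⟩ := slater_scale A C J x₀ h0 hsl
  have hrel : RelSurjAC A C (↑J : Set (Fin p)) := relSurj_of_slater A C ↑J x₁ h1 hs1
  have hnormy : 0 < ‖y‖ := norm_pos_iff.mpr hy
  set yhat : Fin m → ℝ := ‖y‖⁻¹ • y with hyhat
  have hyhat1 : ‖yhat‖ = 1 := by
    rw [hyhat, norm_smul, Real.norm_eq_abs, abs_of_nonneg (inv_nonneg.mpr (norm_nonneg y)),
      inv_mul_cancel₀ (ne_of_gt hnormy)]
  have hfeasA : A.mulVec (‖y‖⁻¹ • zstar) = yhat := by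
    rw [Matrix.mulVec_smul, hzstarJ.1, hyhat]
  have hfeasC : ∀ i ∈ (↑J : Set (Fin p)), C.mulVec (‖y‖⁻¹ • zstar) i ≤ 0 := by
    intro i hi
    rw [Matrix.mulVec_smul]
    simp only [Pi.smul_apply, smul_eq_mul]
    exact mul_nonpos_of_nonneg_of_nonpos (inv_nonneg.mpr (norm_nonneg y))
      (hzstarJ.2 i (Finset.mem_coe.mp hi))
  set t₀ : ℝ := sInf {r' | ∃ x : Fin n → ℝ, A.mulVec x = yhat ∧
      (∀ i ∈ (↑J : Set (Fin p)), C.mulVec x i ≤ 0) ∧ r' = ‖x‖} with ht₀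
  have hSne : {r' | ∃ x : Fin n → ℝ, A.mulVec x = yhat ∧
      (∀ i ∈ (↑J : Set (Fin p)), C.mulVec x i ≤ 0) ∧ r' = ‖x‖}.Nonempty :=
    ⟨‖‖y‖⁻¹ • zstar‖, ‖y‖⁻¹ • zstar, hfeasA, hfeasC, rfl⟩
  have hrle : r ≤ ‖y‖ * t₀ := by
    have hstep : ∀ r' ∈ {r' | ∃ x : Fin n → ℝ, A.mulVec x = yhat ∧
        (∀ i ∈ (↑J : Set (Fin p)), C.mulVec x i ≤ 0) ∧ r' = ‖x‖}, r * ‖y‖⁻¹ ≤ r' := by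
      rintro r' ⟨x, hxA, hxC, rfl⟩
      have hzA : A.mulVec (‖y‖ • x) = y := by
        rw [Matrix.mulVec_smul, hxA, hyhat, smul_smul,
          mul_inv_cancel₀ (ne_of_gt hnormy), one_smul]
      have hzC : ∀ i ∈ J, C.mulVec (‖y‖ • x) i ≤ 0 := by
        intro i hi
        rw [Matrix.mulVec_smul]
        simp only [Pi.smul_apply, smul_eq_mul]
        exact mul_nonpos_of_nonneg_of_nonpos (norm_nonneg y)
          (hxC i (Finset.mem_coe.mpr hi))
      have hrz := hPJ (‖y‖ • x) ⟨hzA, hzC⟩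
      rw [norm_smul, Real.norm_eq_abs, abs_of_nonneg (norm_nonneg y)] at hrz
      rw [← div_eq_mul_inv]
      rw [div_le_iff₀ hnormy]
      linarith [mul_comm ‖x‖ ‖y‖]
    have hinf := le_csInf hSne hstep
    rw [← ht₀] at hinf
    calc r = r * ‖y‖⁻¹ * ‖y‖ := by field_simp
      _ ≤ t₀ * ‖y‖ := mul_le_mul_of_nonneg_right hinf (norm_nonneg y)
      _ = ‖y‖ * t₀ := mul_comm _ _
  have ht₀mem : t₀ ∈ {t | ∃ y' : Fin m → ℝ,
      (∃ x : Fin n → ℝ, (∀ i ∈ (↑J : Set (Fin p)), C.mulVec x i ≤ 0) ∧ y' = A.mulVec x) ∧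
      ‖y'‖ ≤ 1 ∧
      t = sInf {r' | ∃ x : Fin n → ℝ, A.mulVec x = y' ∧
        (∀ i ∈ (↑J : Set (Fin p)), C.mulVec x i ≤ 0) ∧ r' = ‖x‖}} :=
    ⟨yhat, ⟨‖y‖⁻¹ • zstar, hfeasC, hfeasA.symm⟩, le_of_eq hyhat1, ht₀⟩
  have hbddJ := hJstd_bddAbove A C ↑J x₁ h1 hs1
  have ht₀le : t₀ ≤ HJstd A C ↑J := le_csSup hbddJ ht₀mem
  have hHle : HJstd A C ↑J ≤ HoffStd A C := hJstd_le_hoffStd A C ↑J hrel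
  refine ⟨zstar, hzstarF.1, hzstarF.2, ?_⟩
  calc ‖zstar‖ = r := rfl
    _ ≤ ‖y‖ * t₀ := hrle
    _ ≤ ‖y‖ * HoffStd A C :=
        mul_le_mul_of_nonneg_left (le_trans ht₀le hHle) (norm_nonneg y)
    _ = HoffStd A C * ‖y‖ := mul_comm _ _

end HoffmanAux

open HoffmanAux

/-- Proposition 6: with easy inequalities; for all `b, d` with
`{x : Ax = b, Cx ≤ d} ≠ ∅` and all `u` with `Cu ≤ d`,
`dist(u, {x : Ax = b, Cx ≤ d}) ≤ H·‖Au − b‖`, and the bound is tight. -/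
theorem hoffman_easy_ineq {m p n : ℕ} (A : Matrix (Fin m) (Fin n) ℝ)
    (C : Matrix (Fin p) (Fin n) ℝ) :
    (∀ b : Fin m → ℝ, ∀ d : Fin p → ℝ,
      {x : Fin n → ℝ | A.mulVec x = b ∧ ∀ i, C.mulVec x i ≤ d i}.Nonempty →
      ∀ u : Fin n → ℝ, (∀ i, C.mulVec u i ≤ d i) →
        infDist u {x : Fin n → ℝ | A.mulVec x = b ∧ ∀ i, C.mulVec x i ≤ d i} ≤
          HoffStd A C * ‖A.mulVec u - b‖) ∧
    (0 < HoffStd A C →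
      ∃ b : Fin m → ℝ, ∃ d : Fin p → ℝ,
        {x : Fin n → ℝ | A.mulVec x = b ∧ ∀ i, C.mulVec x i ≤ d i}.Nonempty ∧
        ∃ u : Fin n → ℝ, (∀ i, C.mulVec u i ≤ d i) ∧ A.mulVec u ≠ b ∧
          infDist u {x : Fin n → ℝ | A.mulVec x = b ∧ ∀ i, C.mulVec x i ≤ d i} =
            HoffStd A C * ‖A.mulVec u - b‖) := by
  constructor
  · intro b d hK u hu
    classical
    set K : Set (Fin n → ℝ) := {x | A.mulVec x = b ∧ ∀ i, C.mulVec x i ≤ d i} with hKdef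
    have hH0 : 0 ≤ HoffStd A C := hoffStd_nonneg A C
    set H : ℝ := HoffStd A C with hHdef
    set G : Set (Fin n → ℝ) := {v | (∀ i, C.mulVec v i ≤ d i) ∧
      ‖u - v‖ + H * ‖A.mulVec v - b‖ ≤ H * ‖A.mulVec u - b‖} with hGdef
    have huG : u ∈ G := ⟨hu, by simp⟩
    have hGcl : IsClosed G := by
      have h1 : IsClosed {v : Fin n → ℝ | ∀ i, C.mulVec v i ≤ d i} := by
        have he : {v : Fin n → ℝ | ∀ i, C.mulVec v i ≤ d i} =
            ⋂ i, {v : Fin n → ℝ | C.mulVec v i ≤ d i} := by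
          ext v; simp [Set.mem_iInter]
        rw [he]
        exact isClosed_iInter fun i =>
          isClosed_le ((continuous_apply i).comp (mulVec_continuous C)) continuous_const
      have h2 : IsClosed {v : Fin n → ℝ |
          ‖u - v‖ + H * ‖A.mulVec v - b‖ ≤ H * ‖A.mulVec u - b‖} := by
        apply isClosed_le _ continuous_const
        exact ((continuous_const.sub continuous_id).norm).add
          (continuous_const.mul (((mulVec_continuous A).sub continuous_const).norm))
      have he : G = {v : Fin n → ℝ | ∀ i, C.mulVec v i ≤ d i} ∩
          {v : Fin n → ℝ | ‖u - v‖ + H * ‖A.mulVec v - b‖ ≤ H * ‖A.mulVec u - b‖} := by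
        ext v; simp only [hGdef, Set.mem_setOf_eq, Set.mem_inter_iff]
      rw [he]
      exact h1.inter h2
    have hGsub : G ⊆ Metric.closedBall u (H * ‖A.mulVec u - b‖) := by
      intro v hv
      rw [Metric.mem_closedBall, dist_comm, dist_eq_norm]
      have h1 := hv.2
      have h2 : 0 ≤ H * ‖A.mulVec v - b‖ := by positivity
      linarith
    have hGcomp : IsCompact G :=
      (isCompact_closedBall u (H * ‖A.mulVec u - b‖)).of_isClosed_subset hGcl hGsub
    have hcont : ContinuousOn (fun v : Fin n → ℝ => ‖A.mulVec v - b‖) G :=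
      (((mulVec_continuous A).sub continuous_const).norm).continuousOn
    obtain ⟨vs, hvsG, hvsmin⟩ := hGcomp.exists_isMinOn ⟨u, huG⟩ hcont
    have hvsK : A.mulVec vs = b := by
      by_contra hne
      set yv : Fin m → ℝ := b - A.mulVec vs with hyv
      have hyv0 : yv ≠ 0 := by
        intro hcontra
        rw [hyv, sub_eq_zero] at hcontra
        exact hne hcontra.symm
      set J₀ : Finset (Fin p) := Finset.univ.filter (fun i => C.mulVec vs i = d i) with hJ₀
      obtain ⟨xbar, hxbar⟩ := hK
      have hzbar : A.mulVec (xbar - vs) = yv ∧ ∀ i ∈ J₀, C.mulVec (xbar - vs) i ≤ 0 := by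
        constructor
        · rw [Matrix.mulVec_sub, hxbar.1, hyv]
        · intro i hi
          rw [Matrix.mulVec_sub]
          simp only [Pi.sub_apply]
          have h1 : C.mulVec vs i = d i := (Finset.mem_filter.mp hi).2
          have h2 := hxbar.2 i
          linarith
      obtain ⟨z, hzA, hzC, hzn⟩ := core_lemma A C J₀ yv hyv0 _ hzbar
      set Bad : Finset (Fin p) := Finset.univ.filter (fun i => 0 < C.mulVec z i) with hBad
      have hBadJ : ∀ i ∈ Bad, i ∉ J₀ := by
        intro i hi hiJ
        have h1 := hzC i hiJ
        have h2 := (Finset.mem_filter.mp hi).2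
        linarith
      have hslack : ∀ i ∈ Bad, 0 < d i - C.mulVec vs i := by
        intro i hi
        rcases lt_or_eq_of_le (hvsG.1 i) with h | h
        · linarith
        · exact absurd (Finset.mem_filter.mpr ⟨Finset.mem_univ i, h⟩) (hBadJ i hi)
      set t : ℝ := if hB : Bad.Nonempty
        then min 1 (Bad.inf' hB (fun i => (d i - C.mulVec vs i) / C.mulVec z i))
        else 1 with htdef
      have ht0 : 0 < t := by
        rw [htdef]
        split_ifs with hB
        · apply lt_min one_pos
          rw [Finset.lt_inf'_iff]
          intro i hi
          exact div_pos (hslack i hi) ((Finset.mem_filter.mp hi).2)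
        · exact one_pos
      have ht1 : t ≤ 1 := by
        rw [htdef]
        split_ifs with hB
        · exact min_le_left _ _
        · exact le_refl 1
      have htle : ∀ i ∈ Bad, t * C.mulVec z i ≤ d i - C.mulVec vs i := by
        intro i hi
        have hzi : 0 < C.mulVec z i := (Finset.mem_filter.mp hi).2
        have h1 : t ≤ (d i - C.mulVec vs i) / C.mulVec z i := by
          rw [htdef]
          split_ifs with hB
          · exact le_trans (min_le_right _ _) (Finset.inf'_le _ hi)
          · exact absurd ⟨i, hi⟩ hB
        exact (le_div_iff₀ hzi).mp h1
      set v' : Fin n → ℝ := vs + t • z with hv'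
      have hv'C : ∀ i, C.mulVec v' i ≤ d i := by
        intro i
        have hCi : C.mulVec v' i = C.mulVec vs i + t * C.mulVec z i := by
          rw [hv', Matrix.mulVec_add, Matrix.mulVec_smul]
          simp
        rw [hCi]
        by_cases hbad : i ∈ Bad
        · linarith [htle i hbad]
        · have hzi : C.mulVec z i ≤ 0 := by
            by_contra hpos
            push_neg at hpos
            exact hbad (Finset.mem_filter.mpr ⟨Finset.mem_univ i, hpos⟩)
          have h3 : t * C.mulVec z i ≤ 0 :=
            mul_nonpos_of_nonneg_of_nonpos (le_of_lt ht0) hzi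
          linarith [hvsG.1 i]
      have hv'A : A.mulVec v' - b = -((1 - t) • yv) := by
        rw [hv', Matrix.mulVec_add, Matrix.mulVec_smul, hzA, hyv]
        funext j
        simp only [Pi.sub_apply, Pi.add_apply, Pi.smul_apply, Pi.neg_apply, smul_eq_mul]
        ring
      have hv'norm : ‖A.mulVec v' - b‖ = (1 - t) * ‖yv‖ := by
        rw [hv'A, norm_neg, norm_smul, Real.norm_eq_abs,
          abs_of_nonneg (by linarith : (0:ℝ) ≤ 1 - t)]
      have hyvpos : 0 < ‖yv‖ := norm_pos_iff.mpr hyv0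
      have h3 : ‖A.mulVec vs - b‖ = ‖yv‖ := by
        rw [hyv, norm_sub_rev]
      have hv'G : v' ∈ G := by
        refine ⟨hv'C, ?_⟩
        have h1 : ‖u - v'‖ ≤ ‖u - vs‖ + t * ‖z‖ := by
          have he : u - v' = (u - vs) - t • z := by
            rw [hv']
            abel
          rw [he]
          refine le_trans (norm_sub_le _ _) ?_
          rw [norm_smul, Real.norm_eq_abs, abs_of_nonneg (le_of_lt ht0)]
        have h2 := hvsG.2
        have h4 : t * ‖z‖ ≤ t * (H * ‖yv‖) := mul_le_mul_of_nonneg_left hzn (le_of_lt ht0)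
        rw [hv'norm]
        rw [h3] at h2
        nlinarith
      have hv'lt : ‖A.mulVec v' - b‖ < ‖A.mulVec vs - b‖ := by
        rw [hv'norm, h3]
        nlinarith
      exact absurd (hvsmin hv'G) (not_le.mpr hv'lt)
    have hvsmem : vs ∈ K := ⟨hvsK, hvsG.1⟩
    have hdist : infDist u K ≤ dist u vs := Metric.infDist_le_dist_of_mem hvsmem
    have h2 := hvsG.2
    rw [hvsK, sub_self, norm_zero, mul_zero, add_zero] at h2
    calc infDist u K ≤ dist u vs := hdist
      _ = ‖u - vs‖ := dist_eq_norm u vs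
      _ ≤ H * ‖A.mulVec u - b‖ := h2
  · intro hH
    classical
    have hmem : HoffStd A C ∈ {t | ∃ J : Set (Fin p), RelSurjAC A C J ∧ t = HJstd A C J} :=
      (hoffSet_nonempty A C).csSup_mem (hoffSet_finite A C)
    obtain ⟨J₀, hJ₀rel, hJ₀eq⟩ := hmem
    obtain ⟨x₀, hx₀A, hx₀s⟩ := slater_of_relSurj A C J₀ hJ₀rel
    obtain ⟨M, hM0, hMx⟩ := bound_of_slater A C J₀ x₀ hx₀A hx₀s
    set g : (Fin m → ℝ) → ℝ := fun y => sInf {r | ∃ x : Fin n → ℝ, A.mulVec x = y ∧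
      (∀ i ∈ J₀, C.mulVec x i ≤ 0) ∧ r = ‖x‖} with hgdef
    have hbdd : ∀ y : Fin m → ℝ, BddBelow {r | ∃ x : Fin n → ℝ, A.mulVec x = y ∧
        (∀ i ∈ J₀, C.mulVec x i ≤ 0) ∧ r = ‖x‖} := by
      intro y
      refine ⟨0, ?_⟩
      rintro r ⟨x, _, _, rfl⟩
      exact norm_nonneg x
    have hgle : ∀ y : Fin m → ℝ, ∀ x : Fin n → ℝ, A.mulVec x = y →
        (∀ i ∈ J₀, C.mulVec x i ≤ 0) → g y ≤ ‖x‖ := by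
      intro y x h1 h2
      exact csInf_le (hbdd y) ⟨x, h1, h2, rfl⟩
    have hgnneg : ∀ y : Fin m → ℝ, (∃ x, A.mulVec x = y) → 0 ≤ g y := by
      intro y hy
      obtain ⟨x', hx'A, hx'C, _⟩ := hMx y hy
      exact le_csInf ⟨‖x'‖, x', hx'A, hx'C, rfl⟩ (by rintro r ⟨x, _, _, rfl⟩; exact norm_nonneg x)
    have hgne : ∀ y : Fin m → ℝ, (∃ x, A.mulVec x = y) →
        {r | ∃ x : Fin n → ℝ, A.mulVec x = y ∧
          (∀ i ∈ J₀, C.mulVec x i ≤ 0) ∧ r = ‖x‖}.Nonempty := by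
      intro y hy
      obtain ⟨x', hx'A, hx'C, _⟩ := hMx y hy
      exact ⟨‖x'‖, x', hx'A, hx'C, rfl⟩
    -- Lipschitz-type bound
    have hglip : ∀ y₁ y₂ : Fin m → ℝ, (∃ x, A.mulVec x = y₁) → (∃ x, A.mulVec x = y₂) →
        g y₁ ≤ g y₂ + M * ‖y₁ - y₂‖ := by
      intro y₁ y₂ hy₁ hy₂
      obtain ⟨a, ha⟩ := hy₁
      obtain ⟨c, hc⟩ := hy₂
      obtain ⟨xd, hxdA, hxdC, hxdn⟩ := hMx (y₁ - y₂) ⟨a - c, by rw [Matrix.mulVec_sub, ha, hc]⟩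
      have hkey : ∀ r' ∈ {r | ∃ x : Fin n → ℝ, A.mulVec x = y₂ ∧
          (∀ i ∈ J₀, C.mulVec x i ≤ 0) ∧ r = ‖x‖}, g y₁ - M * ‖y₁ - y₂‖ ≤ r' := by
        rintro r' ⟨x₂, hx₂A, hx₂C, rfl⟩
        have hfeas : A.mulVec (x₂ + xd) = y₁ := by
          rw [Matrix.mulVec_add, hx₂A, hxdA]
          abel
        have hfeasC : ∀ i ∈ J₀, C.mulVec (x₂ + xd) i ≤ 0 := by
          intro i hi
          rw [Matrix.mulVec_add]
          simp only [Pi.add_apply]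
          linarith [hx₂C i hi, hxdC i hi]
        have h1 : g y₁ ≤ ‖x₂ + xd‖ := hgle y₁ _ hfeas hfeasC
        have h2 : ‖x₂ + xd‖ ≤ ‖x₂‖ + ‖xd‖ := norm_add_le _ _
        linarith
      have := le_csInf (hgne y₂ ⟨c, hc⟩) hkey
      linarith
    -- the domain of optimization
    set D : Set (Fin m → ℝ) := {y | (∃ x : Fin n → ℝ,
      (∀ i ∈ J₀, C.mulVec x i ≤ 0) ∧ y = A.mulVec x) ∧ ‖y‖ ≤ 1} with hDdef
    set R : Set (Fin m → ℝ) := (LinearMap.range A.mulVecLin : Set (Fin m → ℝ)) with hRdef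
    have hDR : D = R ∩ Metric.closedBall 0 1 := by
      ext y
      constructor
      · rintro ⟨⟨x, _, rfl⟩, hy1⟩
        exact ⟨⟨x, by simp [Matrix.mulVecLin_apply]⟩, by
          simpa [Metric.mem_closedBall, dist_zero_right] using hy1⟩
      · rintro ⟨⟨x, hx⟩, hy1⟩
        have hx' : A.mulVec x = y := by simpa [Matrix.mulVecLin_apply] using hx
        set τ : ℝ := ∑ i ∈ J₀.toFinite.toFinset, max (C.mulVec x i) 0 with hτ
        have hτ0 : 0 ≤ τ :=
          Finset.sum_nonneg fun i _ => le_max_right _ _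
        have hτge : ∀ i ∈ J₀, C.mulVec x i ≤ τ := by
          intro i hi
          calc C.mulVec x i ≤ max (C.mulVec x i) 0 := le_max_left _ _
            _ ≤ τ := Finset.single_le_sum
                (fun j (_ : j ∈ J₀.toFinite.toFinset) => le_max_right (C.mulVec x j) 0)
                (by simpa using hi)
        refine ⟨⟨x + τ • x₀, ?_, ?_⟩, by
          simpa [Metric.mem_closedBall, dist_zero_right] using hy1⟩
        · intro i hi
          have h1 : C.mulVec (x + τ • x₀) i = C.mulVec x i + τ * C.mulVec x₀ i := by
            rw [Matrix.mulVec_add, Matrix.mulVec_smul]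
            simp
          rw [h1]
          have h2 : τ * C.mulVec x₀ i ≤ τ * (-1) :=
            mul_le_mul_of_nonneg_left (hx₀s i hi) hτ0
          linarith [hτge i hi]
        · rw [Matrix.mulVec_add, Matrix.mulVec_smul, hx₀A, smul_zero, add_zero, hx']
    have hRclosed : IsClosed R := Submodule.closed_of_finiteDimensional _
    have hDcomp : IsCompact D := by
      rw [hDR]
      exact (isCompact_closedBall (0 : Fin m → ℝ) 1).inter_left hRclosed
    have hDne : D.Nonempty := ⟨0, ⟨0, fun i _ => by simp [Matrix.mulVec_zero],
      by simp [Matrix.mulVec_zero]⟩, by simp⟩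
    have hDsubR : D ⊆ R := by
      rw [hDR]; exact Set.inter_subset_left
    have hRrange : ∀ y ∈ R, ∃ x, A.mulVec x = y := by
      rintro y ⟨x, hx⟩
      exact ⟨x, by simpa [Matrix.mulVecLin_apply] using hx⟩
    have hglipOn : LipschitzOnWith (Real.toNNReal M) g R := by
      apply LipschitzOnWith.of_dist_le_mul
      intro y₁ hy₁ y₂ hy₂
      rw [Real.dist_eq, dist_eq_norm]
      rw [abs_sub_le_iff]
      constructor
      · have := hglip y₁ y₂ (hRrange y₁ hy₁) (hRrange y₂ hy₂)
        rw [Real.coe_toNNReal M hM0]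
        linarith
      · have := hglip y₂ y₁ (hRrange y₂ hy₂) (hRrange y₁ hy₁)
        rw [Real.coe_toNNReal M hM0, norm_sub_rev]
        linarith
    have hgcont : ContinuousOn g D := (hglipOn.continuousOn).mono hDsubR
    obtain ⟨ystar, hystarD, hymax⟩ := hDcomp.exists_isMaxOn hDne hgcont
    -- HJstd = g ystar
    have hgreat : IsGreatest (g '' D) (g ystar) :=
      ⟨⟨ystar, hystarD, rfl⟩, by rintro t ⟨y, hy, rfl⟩; exact hymax hy⟩
    have hHJval : HJstd A C J₀ = g ystar := by
      have hseteq : {t | ∃ y : Fin m → ℝ,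
          (∃ x : Fin n → ℝ, (∀ i ∈ J₀, C.mulVec x i ≤ 0) ∧ y = A.mulVec x) ∧ ‖y‖ ≤ 1 ∧
          t = sInf {r | ∃ x : Fin n → ℝ, A.mulVec x = y ∧
            (∀ i ∈ J₀, C.mulVec x i ≤ 0) ∧ r = ‖x‖}} = g '' D := by
        ext t
        constructor
        · rintro ⟨y, h1, h2, rfl⟩
          exact ⟨y, ⟨h1, h2⟩, rfl⟩
        · rintro ⟨y, ⟨h1, h2⟩, rfl⟩
          exact ⟨y, h1, h2, rfl⟩
      rw [HJstd, hseteq]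
      exact hgreat.csSup_eq
    have hgystar : g ystar = HoffStd A C := by rw [← hHJval, ← hJ₀eq]
    -- ystar has norm one
    have hystar0 : ystar ≠ 0 := by
      intro hcontra
      have h0 : g (0 : Fin m → ℝ) = 0 := by
        refine le_antisymm ?_ (hgnneg 0 ⟨0, Matrix.mulVec_zero A⟩)
        refine csInf_le (hbdd 0) ⟨0, Matrix.mulVec_zero A, fun i _ => ?_, by simp⟩
        simp [Matrix.mulVec_zero]
      rw [hcontra, h0] at hgystar
      rw [← hgystar] at hH
      exact lt_irrefl 0 hH
    have hynpos : 0 < ‖ystar‖ := norm_pos_iff.mpr hystar0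
    -- scaling inequality: g (c • y) ≤ c * g y for c > 0
    have hgscale : ∀ (c : ℝ), 0 < c → ∀ y : Fin m → ℝ, (∃ x, A.mulVec x = y) →
        g (c • y) ≤ c * g y := by
      intro c hc y hy
      have hkey : ∀ r' ∈ {r | ∃ x : Fin n → ℝ, A.mulVec x = y ∧
          (∀ i ∈ J₀, C.mulVec x i ≤ 0) ∧ r = ‖x‖}, g (c • y) * c⁻¹ ≤ r' := by
        rintro r' ⟨x, hxA, hxC, rfl⟩
        have h1 : g (c • y) ≤ ‖c • x‖ := by
          refine hgle (c • y) (c • x) ?_ ?_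
          · rw [Matrix.mulVec_smul, hxA]
          · intro i hi
            rw [Matrix.mulVec_smul]
            simp only [Pi.smul_apply, smul_eq_mul]
            exact mul_nonpos_of_nonneg_of_nonpos (le_of_lt hc) (hxC i hi)
        rw [norm_smul, Real.norm_eq_abs, abs_of_pos hc] at h1
        rw [mul_inv_le_iff₀ hc, mul_comm ‖x‖ c]
        exact h1
      have := le_csInf (hgne y hy) hkey
      have h2 : g (c • y) * c⁻¹ * c ≤ g y * c :=
        mul_le_mul_of_nonneg_right this (le_of_lt hc)
      rw [inv_mul_cancel_right₀ (ne_of_gt hc)] at h2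
      linarith [h2, mul_comm (g y) c]
    have hynorm1 : ‖ystar‖ = 1 := by
      by_contra hne1
      have hlt1 : ‖ystar‖ < 1 := lt_of_le_of_ne (by
        have := hystarD.2
        exact this) hne1
      obtain ⟨xw, hxwC, hxwA⟩ := hystarD.1
      set yh : Fin m → ℝ := ‖ystar‖⁻¹ • ystar with hyh
      have hyh1 : ‖yh‖ = 1 := by
        rw [hyh, norm_smul, Real.norm_eq_abs, abs_of_pos (inv_pos.mpr hynpos),
          inv_mul_cancel₀ (ne_of_gt hynpos)]
      have hyhD : yh ∈ D := by
        refine ⟨⟨‖ystar‖⁻¹ • xw, ?_, ?_⟩, le_of_eq hyh1⟩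
        · intro i hi
          rw [Matrix.mulVec_smul]
          simp only [Pi.smul_apply, smul_eq_mul]
          exact mul_nonpos_of_nonneg_of_nonpos (inv_nonneg.mpr (norm_nonneg ystar))
            (hxwC i hi)
        · rw [Matrix.mulVec_smul, ← hxwA, hyh]
      have hsc : g (‖ystar‖ • yh) ≤ ‖ystar‖ * g yh := by
        apply hgscale ‖ystar‖ hynpos yh
        exact ⟨‖ystar‖⁻¹ • xw, by rw [Matrix.mulVec_smul, ← hxwA, hyh]⟩
      have hyeq : ‖ystar‖ • yh = ystar := by
        rw [hyh, smul_smul, mul_inv_cancel₀ (ne_of_gt hynpos), one_smul]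
      rw [hyeq] at hsc
      have hle2 : g yh ≤ g ystar := hymax hyhD
      have : g ystar ≤ ‖ystar‖ * g ystar := le_trans hsc
        (mul_le_mul_of_nonneg_left hle2 (norm_nonneg ystar))
      have hpos : 0 < g ystar := by rw [hgystar]; exact hH
      nlinarith
    -- minimiser for ystar
    obtain ⟨xw, hxwC, hxwA⟩ := hystarD.1
    set FS : Set (Fin n → ℝ) := {x | A.mulVec x = ystar ∧ ∀ i ∈ J₀, C.mulVec x i ≤ 0}
      with hFS
    have hFScl : IsClosed FS := by
      have h1 : IsClosed {x : Fin n → ℝ | A.mulVec x = ystar} :=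
        isClosed_eq (mulVec_continuous A) continuous_const
      have h2 : IsClosed {x : Fin n → ℝ | ∀ i ∈ J₀, C.mulVec x i ≤ 0} := by
        have he : {x : Fin n → ℝ | ∀ i ∈ J₀, C.mulVec x i ≤ 0} =
            ⋂ i ∈ J₀, {x : Fin n → ℝ | C.mulVec x i ≤ 0} := by
          ext x; simp [Set.mem_iInter]
        rw [he]
        exact isClosed_biInter fun i _ =>
          isClosed_le ((continuous_apply i).comp (mulVec_continuous C)) continuous_const
      have he : FS = {x : Fin n → ℝ | A.mulVec x = ystar} ∩
          {x : Fin n → ℝ | ∀ i ∈ J₀, C.mulVec x i ≤ 0} := by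
        ext x; simp only [hFS, Set.mem_setOf_eq, Set.mem_inter_iff]
      rw [he]
      exact h1.inter h2
    obtain ⟨xstar, hxstarF, hxstarmin⟩ := min_norm_exists FS hFScl ⟨xw, hxwA.symm, hxwC⟩
    have hgx : g ystar = ‖xstar‖ := by
      refine le_antisymm (hgle ystar xstar hxstarF.1 hxstarF.2) ?_
      refine le_csInf ⟨‖xstar‖, xstar, hxstarF.1, hxstarF.2, rfl⟩ ?_
      rintro r ⟨x, hxA, hxC, rfl⟩
      exact hxstarmin x ⟨hxA, hxC⟩
    -- the tight instance
    set d : Fin p → ℝ := fun i => if i ∈ J₀ then 0 else max (C.mulVec xstar i) 0 with hd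
    refine ⟨ystar, d, ⟨xstar, hxstarF.1, ?_⟩, 0, ?_, ?_, ?_⟩
    · intro i
      rw [hd]
      by_cases hi : i ∈ J₀
      · simp only [if_pos hi]
        exact hxstarF.2 i hi
      · simp only [if_neg hi]
        exact le_max_left _ _
    · intro i
      rw [Matrix.mulVec_zero, hd]
      by_cases hi : i ∈ J₀
      · simp [if_pos hi]
      · simp only [if_neg hi, Pi.zero_apply]
        exact le_max_right _ _
    · rw [Matrix.mulVec_zero]
      intro hcontra
      exact hystar0 hcontra.symm
    · have hRHS : HoffStd A C * ‖A.mulVec (0 : Fin n → ℝ) - ystar‖ = HoffStd A C := by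
        rw [Matrix.mulVec_zero, zero_sub, norm_neg, hynorm1, mul_one]
      rw [hRHS]
      set K : Set (Fin n → ℝ) := {x | A.mulVec x = ystar ∧ ∀ i, C.mulVec x i ≤ d i}
        with hK
      have hxstarK : xstar ∈ K := by
        refine ⟨hxstarF.1, fun i => ?_⟩
        rw [hd]
        by_cases hi : i ∈ J₀
        · simp only [if_pos hi]
          exact hxstarF.2 i hi
        · simp only [if_neg hi]
          exact le_max_left _ _
      have hle : infDist (0 : Fin n → ℝ) K ≤ HoffStd A C := by
        have h1 : infDist (0 : Fin n → ℝ) K ≤ dist (0 : Fin n → ℝ) xstar :=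
          Metric.infDist_le_dist_of_mem hxstarK
        rw [dist_eq_norm, zero_sub, norm_neg, ← hgx, hgystar] at h1
        exact h1
      have hge : HoffStd A C ≤ infDist (0 : Fin n → ℝ) K := by
        by_contra hcon
        push_neg at hcon
        rw [Metric.infDist_lt_iff ⟨xstar, hxstarK⟩] at hcon
        obtain ⟨x, hxK, hxlt⟩ := hcon
        rw [dist_eq_norm, zero_sub, norm_neg] at hxlt
        have hfeasC : ∀ i ∈ J₀, C.mulVec x i ≤ 0 := by
          intro i hi
          have := hxK.2 i
          simp only [hd] at this
          rw [if_pos hi] at this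
          exact this
        have := hgle ystar x hxK.1 hfeasC
        rw [hgystar] at this
        linarith
      exact le_antisymm hle hge
end

section
/- Let A ∈ ℝ^{m×n}, C ∈ ℝ^{p×n}, and H := max_{J∈S(A;C)} H_J where H_J := max_{w∈ℝ^p, ‖w‖≤1} min{‖x‖ : Ax = 0, C_J x ≤ w_J}. Then for all b ∈ ℝ^m, d ∈ ℝ^p such that {x : Ax = b, Cx ≤ d} is nonempty, and all u with Au = b, dist(u, {x : Ax = b, Cx ≤ d}) ≤ H · dist(d, Cu + ℝ^p_+) ≤ H · ‖(Cu − d)_+‖. -/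
open Matrix Metric

/-- `H_J = max_{w ∈ ℝ^p, ‖w‖≤1} min{‖x‖ : Ax = 0, C_J x ≤ w_J}`. -/
noncomputable def HJeq {m p n : ℕ} (A : Matrix (Fin m) (Fin n) ℝ)
    (C : Matrix (Fin p) (Fin n) ℝ) (J : Set (Fin p)) : ℝ :=
  sSup {t | ∃ w : Fin p → ℝ, ‖w‖ ≤ 1 ∧
    t = sInf {r | ∃ x : Fin n → ℝ, A.mulVec x = 0 ∧
      (∀ i ∈ J, C.mulVec x i ≤ w i) ∧ r = ‖x‖}}

/-- `H = max_{J ∈ S(A;C)} H_J`. -/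
noncomputable def HoffEq {m p n : ℕ} (A : Matrix (Fin m) (Fin n) ℝ)
    (C : Matrix (Fin p) (Fin n) ℝ) : ℝ :=
  sSup {t | ∃ J : Set (Fin p), RelSurjAC A C J ∧ t = HJeq A C J}

theorem farkas_fin {V : Type*} [AddCommGroup V] [Module ℝ V] :
    ∀ (k : ℕ) (g : Fin k → (V →ₗ[ℝ] ℝ)) (f : V →ₗ[ℝ] ℝ),
    (∀ x, (∀ i, g i x ≤ 0) → f x ≤ 0) →
    ∃ lam : Fin k → ℝ, (∀ i, 0 ≤ lam i) ∧ ∀ x, f x = ∑ i, lam i * g i x := by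
  intro k
  induction k with
  | zero =>
    intro g f h
    refine ⟨0, fun i => le_rfl, fun x => ?_⟩
    simp only [Finset.univ_eq_empty, Finset.sum_empty]
    have h1 := h x (fun i => i.elim0)
    have h2 := h (-x) (fun i => i.elim0)
    simp only [map_neg] at h2
    linarith
  | succ k ih =>
    intro g f h
    by_cases hc : ∀ x, (∀ i : Fin k, g i.succ x ≤ 0) → f x ≤ 0
    · obtain ⟨lam, hlam, hfe⟩ := ih (fun i => g i.succ) f hc
      refine ⟨Fin.cons 0 lam, ?_, fun x => ?_⟩
      · intro i
        refine Fin.cases ?_ ?_ i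
        · simp
        · intro j; simpa using hlam j
      · rw [Fin.sum_univ_succ]
        simp [hfe x]
    · push_neg at hc
      obtain ⟨x₀, hg0, hfx0⟩ := hc
      have hg00 : 0 < g 0 x₀ := by
        by_contra hle
        push_neg at hle
        have : ∀ i : Fin (k+1), g i x₀ ≤ 0 := by
          intro i
          refine Fin.cases ?_ ?_ i
          · exact hle
          · intro j; exact hg0 j
        exact absurd (h x₀ this) (not_le.mpr hfx0)
      set x₁ : V := (g 0 x₀)⁻¹ • x₀ with hx₁
      have hg0x₁ : g 0 x₁ = 1 := by
        simp [hx₁, LinearMap.map_smul, smul_eq_mul, inv_mul_cancel₀ (ne_of_gt hg00)]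
      have hgsx₁ : ∀ i : Fin k, g i.succ x₁ ≤ 0 := by
        intro i
        simp only [hx₁, LinearMap.map_smul, smul_eq_mul]
        exact mul_nonpos_of_nonneg_of_nonpos (le_of_lt (inv_pos.mpr hg00)) (hg0 i)
      have hfx₁ : 0 < f x₁ := by
        simp only [hx₁, LinearMap.map_smul, smul_eq_mul]
        exact mul_pos (inv_pos.mpr hg00) hfx0
      set h' : Fin k → (V →ₗ[ℝ] ℝ) := fun i => g i.succ - (g i.succ x₁) • g 0 with hh'
      set f' : V →ₗ[ℝ] ℝ := f - (f x₁) • g 0 with hf'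
      have hprem : ∀ x, (∀ i, h' i x ≤ 0) → f' x ≤ 0 := by
        intro x hx
        set x' : V := x - (g 0 x) • x₁ with hx'
        have hgx' : ∀ i : Fin (k+1), g i x' ≤ 0 := by
          intro i
          refine Fin.cases ?_ ?_ i
          · simp [hx', map_sub, LinearMap.map_smul, smul_eq_mul, hg0x₁]
          · intro j
            have := hx j
            simp only [hh', LinearMap.sub_apply, LinearMap.smul_apply, smul_eq_mul] at this
            simp only [hx', map_sub, LinearMap.map_smul, smul_eq_mul]
            linarith [this]
        have := h x' hgx'
        simp only [hx', map_sub, LinearMap.map_smul, smul_eq_mul] at this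
        simp only [hf', LinearMap.sub_apply, LinearMap.smul_apply, smul_eq_mul]
        linarith
      obtain ⟨mu, hmu, hmue⟩ := ih h' f' hprem
      refine ⟨Fin.cons (f x₁ - ∑ i, mu i * g i.succ x₁) mu, ?_, ?_⟩
      · intro i
        refine Fin.cases ?_ ?_ i
        · simp only [Fin.cons_zero]
          have : ∑ i, mu i * g i.succ x₁ ≤ 0 :=
            Finset.sum_nonpos (fun i _ => mul_nonpos_of_nonneg_of_nonpos (hmu i) (hgsx₁ i))
          linarith
        · intro j; simpa using hmu j
      · intro x
        have he := hmue x
        simp only [hf', hh', LinearMap.sub_apply, LinearMap.smul_apply, smul_eq_mul] at he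
        rw [Fin.sum_univ_succ]
        simp only [Fin.cons_zero, Fin.cons_succ]
        have hsum : ∑ i, mu i * (g i.succ x - g i.succ x₁ * g 0 x)
            = ∑ i, mu i * g i.succ x - (∑ i, mu i * g i.succ x₁) * g 0 x := by
          rw [Finset.sum_mul, ← Finset.sum_sub_distrib]
          congr 1; ext i; ring
        rw [hsum] at he
        ring_nf
        ring_nf at he
        linarith

theorem farkas {V : Type*} [AddCommGroup V] [Module ℝ V] {ι : Type*} [Fintype ι]
    (g : ι → (V →ₗ[ℝ] ℝ)) (f : V →ₗ[ℝ] ℝ)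
    (h : ∀ x, (∀ i, g i x ≤ 0) → f x ≤ 0) :
    ∃ lam : ι → ℝ, (∀ i, 0 ≤ lam i) ∧ ∀ x, f x = ∑ i, lam i * g i x := by
  obtain ⟨e⟩ : Nonempty (ι ≃ Fin (Fintype.card ι)) := ⟨Fintype.equivFin ι⟩
  obtain ⟨lam, hlam, hfe⟩ := farkas_fin (Fintype.card ι) (fun j => g (e.symm j)) f
    (fun x hx => h x (fun i => by simpa using hx (e i)))
  refine ⟨fun i => lam (e i), fun i => hlam (e i), fun x => ?_⟩
  rw [hfe x]
  exact (Fintype.sum_equiv e (fun i => lam (e i) * (g i) x)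
    (fun j => lam j * (g (e.symm j)) x) (fun i => by simp)).symm

/-- Slater condition implies relative surjectivity. -/
theorem relSurj_of_slater {m p n : ℕ} (A : Matrix (Fin m) (Fin n) ℝ)
    (C : Matrix (Fin p) (Fin n) ℝ) (J : Set (Fin p))
    (z : Fin n → ℝ) (hz0 : A.mulVec z = 0) (hz : ∀ i ∈ J, C.mulVec z i ≤ -1) :
    RelSurjAC A C J := by
  let S : Set ((Fin m → ℝ) × (Fin p → ℝ)) := {q | ∃ x : Fin n → ℝ, ∃ s : Fin p → ℝ,
      (∀ i ∈ J, 0 ≤ s i) ∧ q = (A.mulVec x, C.mulVec x + s)}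
  have hadd : ∀ {q₁ q₂ : (Fin m → ℝ) × (Fin p → ℝ)}, q₁ ∈ S → q₂ ∈ S → q₁ + q₂ ∈ S := by
    rintro q₁ q₂ ⟨x₁, s₁, hs₁, rfl⟩ ⟨x₂, s₂, hs₂, rfl⟩
    refine ⟨x₁ + x₂, s₁ + s₂, fun i hi => add_nonneg (hs₁ i hi) (hs₂ i hi), ?_⟩
    refine Prod.ext ?_ ?_
    · simp [Matrix.mulVec_add]
    · simp only [Matrix.mulVec_add, Prod.snd_add]
      abel
  have hzero : (0 : (Fin m → ℝ) × (Fin p → ℝ)) ∈ S :=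
    ⟨0, 0, fun i _ => le_rfl, by simp [Matrix.mulVec_zero]; rfl⟩
  have hsmul : ∀ (c : ℝ) {q : (Fin m → ℝ) × (Fin p → ℝ)}, q ∈ S → c • q ∈ S := by
    rintro c q ⟨x, s, hs, rfl⟩
    by_cases hc : 0 ≤ c
    · refine ⟨c • x, c • s, fun i hi => mul_nonneg hc (hs i hi), ?_⟩
      refine Prod.ext ?_ ?_
      · simp [Matrix.mulVec_smul]
      · simp only [Matrix.mulVec_smul, Prod.smul_snd, smul_add]
    · push_neg at hc
      set t : ℝ := ∑ i, |c * s i| with ht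
      have htn : 0 ≤ t := Finset.sum_nonneg (fun i _ => abs_nonneg _)
      refine ⟨c • x + t • z, c • s - t • (C.mulVec z), fun i hi => ?_, ?_⟩
      · have h1 : |c * s i| ≤ t :=
          Finset.single_le_sum (f := fun i => |c * s i|) (fun i _ => abs_nonneg _)
            (Finset.mem_univ i)
        have h2 : C.mulVec z i ≤ -1 := hz i hi
        have h3 : t * (C.mulVec z i) ≤ t * (-1) := mul_le_mul_of_nonneg_left h2 htn
        have h4 : -|c * s i| ≤ c * s i := neg_abs_le _
        simp only [Pi.sub_apply, Pi.smul_apply, smul_eq_mul]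
        nlinarith [abs_nonneg (c * s i)]
      · refine Prod.ext ?_ ?_
        · simp [Matrix.mulVec_add, Matrix.mulVec_smul, hz0]
        · simp only [Matrix.mulVec_add, Matrix.mulVec_smul, Prod.smul_snd, smul_add]
          abel
  exact ⟨{ carrier := S, add_mem' := hadd, zero_mem' := hzero,
           smul_mem' := fun c _ h => hsmul c h }, rfl⟩
theorem cert_of_not_slater {m p n : ℕ} (A : Matrix (Fin m) (Fin n) ℝ)
    (C : Matrix (Fin p) (Fin n) ℝ) (J : Set (Fin p))
    (h : ¬ ∃ z, A.mulVec z = 0 ∧ ∀ i ∈ J, C.mulVec z i ≤ -1) :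
    ∃ (lam : Fin p → ℝ) (mu : Fin m → ℝ), (∀ i, 0 ≤ lam i) ∧
      (∀ i, i ∉ J → lam i = 0) ∧ (∑ i, lam i = 1) ∧
      (∀ x, mu ⬝ᵥ A.mulVec x + ∑ i, lam i * C.mulVec x i = 0) := by
  classical
  set V := (Fin n → ℝ) × ℝ with hV
  let π₁ : V →ₗ[ℝ] (Fin n → ℝ) := LinearMap.fst ℝ _ _
  let π₂ : V →ₗ[ℝ] ℝ := LinearMap.snd ℝ _ _
  let rowA : Fin m → (V →ₗ[ℝ] ℝ) := fun i =>
    (LinearMap.proj i).comp (A.mulVecLin.comp π₁)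
  let rowC : Fin p → (V →ₗ[ℝ] ℝ) := fun i =>
    (LinearMap.proj i).comp (C.mulVecLin.comp π₁)
  have hrowA : ∀ i (q : V), rowA i q = A.mulVec q.1 i := fun i q => rfl
  let g : ((Fin m ⊕ Fin m) ⊕ Fin p) → (V →ₗ[ℝ] ℝ) :=
    Sum.elim (Sum.elim (fun i => rowA i) (fun i => -rowA i))
      (fun i => if i ∈ J then rowC i + π₂ else 0)
  have hgC : ∀ (i : Fin p) (q : V),
      g (Sum.inr i) q = if i ∈ J then C.mulVec q.1 i + q.2 else 0 := by
    intro i q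
    simp only [g, Sum.elim_inr]
    split <;> rfl
  have hprem : ∀ q : V, (∀ i, g i q ≤ 0) → π₂ q ≤ 0 := by
    rintro ⟨z, t⟩ hq
    have hA : A.mulVec z = 0 := by
      funext i
      have h1 := hq (Sum.inl (Sum.inl i))
      have h2 := hq (Sum.inl (Sum.inr i))
      simp only [g, Sum.elim_inl, Sum.elim_inr, LinearMap.neg_apply, hrowA] at h1 h2
      simp only [Pi.zero_apply]
      linarith
    by_contra ht
    push_neg at ht
    simp only [π₂, LinearMap.snd_apply] at ht ⊢
    refine h ⟨t⁻¹ • z, ?_, ?_⟩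
    · rw [Matrix.mulVec_smul, hA]; simp
    · intro i hi
      have h3 := hq (Sum.inr i)
      rw [hgC] at h3
      simp only [if_pos hi] at h3
      rw [Matrix.mulVec_smul]
      have ht' : 0 < t := ht
      have h5 : C.mulVec z i ≤ -t := by linarith
      have h4 : t⁻¹ * C.mulVec z i ≤ t⁻¹ * (-t) :=
        mul_le_mul_of_nonneg_left h5 (le_of_lt (inv_pos.mpr ht'))
      have h6 : t⁻¹ * (-t) = -1 := by
        rw [mul_neg, inv_mul_cancel₀ (ne_of_gt ht')]
      rw [h6] at h4
      simpa using h4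
  obtain ⟨lam', hlam', hid⟩ := farkas g π₂ hprem
  have hsplit : ∀ q : V, π₂ q =
      (∑ i, lam' (Sum.inl (Sum.inl i)) * A.mulVec q.1 i)
      - (∑ i, lam' (Sum.inl (Sum.inr i)) * A.mulVec q.1 i)
      + ∑ i, (if i ∈ J then lam' (Sum.inr i) * (C.mulVec q.1 i + q.2) else 0) := by
    intro q
    have e1 : ∑ i, lam' (Sum.inl (Sum.inl i)) * g (Sum.inl (Sum.inl i)) q
        = ∑ i, lam' (Sum.inl (Sum.inl i)) * A.mulVec q.1 i := by
      apply Finset.sum_congr rfl; intro i _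
      simp only [g, Sum.elim_inl, Sum.elim_inr, hrowA]
    have e2 : ∑ i, lam' (Sum.inl (Sum.inr i)) * g (Sum.inl (Sum.inr i)) q
        = ∑ i, -(lam' (Sum.inl (Sum.inr i)) * A.mulVec q.1 i) := by
      apply Finset.sum_congr rfl; intro i _
      simp only [g, Sum.elim_inl, Sum.elim_inr, LinearMap.neg_apply, hrowA]
      ring
    have e3 : ∑ i, lam' (Sum.inr i) * g (Sum.inr i) q
        = ∑ i, (if i ∈ J then lam' (Sum.inr i) * (C.mulVec q.1 i + q.2) else 0) := by
      apply Finset.sum_congr rfl; intro i _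
      rw [hgC]
      by_cases hi : i ∈ J <;> simp [hi]
    rw [hid q, Fintype.sum_sum_type, Fintype.sum_sum_type, e1, e2, e3]
    rw [Finset.sum_neg_distrib]
    ring
  refine ⟨fun i => if i ∈ J then lam' (Sum.inr i) else 0,
    fun i => lam' (Sum.inl (Sum.inl i)) - lam' (Sum.inl (Sum.inr i)), ?_, ?_, ?_, ?_⟩
  · intro i
    by_cases hi : i ∈ J <;> simp [hi, hlam' (Sum.inr i)]
  · intro i hi; simp [hi]
  · have hval := hsplit (0, 1)
    simp only [Matrix.mulVec_zero, Pi.zero_apply, mul_zero,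
      Finset.sum_const_zero, zero_sub, neg_zero, zero_add, sub_zero] at hval
    have hval' : (1 : ℝ) = ∑ i, (if i ∈ J then lam' (Sum.inr i) * 1 else 0) := hval
    rw [show (1:ℝ) = ∑ i, (if i ∈ J then lam' (Sum.inr i) * 1 else 0) from hval']
    apply Finset.sum_congr rfl
    intro i _
    by_cases hi : i ∈ J <;> simp [hi]
  · intro x
    have hval : (0 : ℝ) = ∑ i, lam' (Sum.inl (Sum.inl i)) * A.mulVec x i
      - ∑ i, lam' (Sum.inl (Sum.inr i)) * A.mulVec x i
      + ∑ i, (if i ∈ J then lam' (Sum.inr i) * (C.mulVec x i + 0) else 0) := hsplit (x, 0)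
    have hd : (fun i => lam' (Sum.inl (Sum.inl i)) - lam' (Sum.inl (Sum.inr i))) ⬝ᵥ A.mulVec x
        = ∑ i, lam' (Sum.inl (Sum.inl i)) * A.mulVec x i
          - ∑ i, lam' (Sum.inl (Sum.inr i)) * A.mulVec x i := by
      simp only [dotProduct, sub_mul, Finset.sum_sub_distrib]
    have hc : ∑ i, (if i ∈ J then lam' (Sum.inr i) else 0) * C.mulVec x i
        = ∑ i, (if i ∈ J then lam' (Sum.inr i) * (C.mulVec x i + 0) else 0) := by
      apply Finset.sum_congr rfl
      intro i _
      by_cases hi : i ∈ J <;> simp [hi]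
    rw [hd, hc]
    linarith [hval]
theorem dual_cert {m p n : ℕ} (A : Matrix (Fin m) (Fin n) ℝ)
    (C : Matrix (Fin p) (Fin n) ℝ) (b : Fin m → ℝ) (d : Fin p → ℝ)
    (xb : Fin n → ℝ) (hxb1 : A.mulVec xb = b) (hxb2 : ∀ i, C.mulVec xb i ≤ d i)
    (φ : (Fin n → ℝ) →ₗ[ℝ] ℝ) (c : ℝ)
    (hφ : ∀ x, A.mulVec x = b → (∀ i, C.mulVec x i ≤ d i) → c ≤ φ x) :
    ∃ (lam : Fin p → ℝ) (mu : Fin m → ℝ), (∀ i, 0 ≤ lam i) ∧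
      (∀ x, φ x = -(mu ⬝ᵥ A.mulVec x) - ∑ i, lam i * C.mulVec x i) ∧
      mu ⬝ᵥ b + ∑ i, lam i * d i ≤ -c := by
  classical
  set V := (Fin n → ℝ) × ℝ with hV
  let π₁ : V →ₗ[ℝ] (Fin n → ℝ) := LinearMap.fst ℝ _ _
  let π₂ : V →ₗ[ℝ] ℝ := LinearMap.snd ℝ _ _
  let rowA : Fin m → (V →ₗ[ℝ] ℝ) := fun i =>
    (LinearMap.proj i).comp (A.mulVecLin.comp π₁) - b i • π₂
  let rowC : Fin p → (V →ₗ[ℝ] ℝ) := fun i =>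
    (LinearMap.proj i).comp (C.mulVecLin.comp π₁) - d i • π₂
  have hrowA : ∀ i (q : V), rowA i q = A.mulVec q.1 i - q.2 * b i := by
    intro i q
    simp only [rowA, LinearMap.sub_apply, LinearMap.smul_apply, smul_eq_mul]
    rw [mul_comm]
    rfl
  have hrowC : ∀ i (q : V), rowC i q = C.mulVec q.1 i - q.2 * d i := by
    intro i q
    simp only [rowC, LinearMap.sub_apply, LinearMap.smul_apply, smul_eq_mul]
    rw [mul_comm]
    rfl
  let g : ((Fin m ⊕ Fin m) ⊕ (Fin p ⊕ Unit)) → (V →ₗ[ℝ] ℝ) :=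
    Sum.elim (Sum.elim (fun i => rowA i) (fun i => -rowA i))
      (Sum.elim (fun i => rowC i) (fun _ => -π₂))
  let f : V →ₗ[ℝ] ℝ := c • π₂ - φ.comp π₁
  have hf : ∀ q : V, f q = c * q.2 - φ q.1 := by
    intro i
    simp only [f, LinearMap.sub_apply, LinearMap.smul_apply, smul_eq_mul]
    rfl
  have hprem : ∀ q : V, (∀ i, g i q ≤ 0) → f q ≤ 0 := by
    rintro ⟨x, t⟩ hq
    have hA : ∀ i, A.mulVec x i = t * b i := by
      intro i
      have h1 := hq (Sum.inl (Sum.inl i))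
      have h2 := hq (Sum.inl (Sum.inr i))
      simp only [g, Sum.elim_inl, Sum.elim_inr, LinearMap.neg_apply, hrowA] at h1 h2
      have : A.mulVec (x, t).1 i - (x, t).2 * b i = A.mulVec x i - t * b i := rfl
      rw [this] at h1 h2
      linarith
    have hC : ∀ i, C.mulVec x i ≤ t * d i := by
      intro i
      have h1 := hq (Sum.inr (Sum.inl i))
      simp only [g, Sum.elim_inl, Sum.elim_inr, hrowC] at h1
      have : C.mulVec (x, t).1 i - (x, t).2 * d i = C.mulVec x i - t * d i := rfl
      rw [this] at h1
      linarith
    have htn : 0 ≤ t := by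
      have h1 := hq (Sum.inr (Sum.inr ()))
      simp only [g, Sum.elim_inr, LinearMap.neg_apply] at h1
      have : π₂ (x, t) = t := rfl
      rw [this] at h1
      linarith
    rw [hf]
    show c * t - φ x ≤ 0
    rcases lt_or_eq_of_le htn with htp | ht0
    · -- t > 0
      have hfeas1 : A.mulVec (t⁻¹ • x) = b := by
        funext i
        rw [Matrix.mulVec_smul]
        have : (t⁻¹ • A.mulVec x) i = t⁻¹ * A.mulVec x i := rfl
        rw [this, hA i, ← mul_assoc, inv_mul_cancel₀ (ne_of_gt htp), one_mul]
      have hfeas2 : ∀ i, C.mulVec (t⁻¹ • x) i ≤ d i := by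
        intro i
        rw [Matrix.mulVec_smul]
        have h4 : t⁻¹ * C.mulVec x i ≤ t⁻¹ * (t * d i) :=
          mul_le_mul_of_nonneg_left (hC i) (le_of_lt (inv_pos.mpr htp))
        rw [← mul_assoc, inv_mul_cancel₀ (ne_of_gt htp), one_mul] at h4
        exact h4
      have := hφ (t⁻¹ • x) hfeas1 hfeas2
      rw [LinearMap.map_smul, smul_eq_mul] at this
      -- c ≤ t⁻¹ * φ x, so c * t ≤ φ x
      have h5 : c * t ≤ (t⁻¹ * φ x) * t := mul_le_mul_of_nonneg_right this (le_of_lt htp)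
      rw [mul_comm t⁻¹ (φ x), mul_assoc, inv_mul_cancel₀ (ne_of_gt htp), mul_one] at h5
      linarith
    · -- t = 0
      subst ht0
      by_contra hcon
      push_neg at hcon
      have hφx : φ x < 0 := by linarith
      set s : ℝ := (φ xb - c + 1) / (-(φ x)) with hs
      have hsn : 0 ≤ s := by
        apply div_nonneg
        · linarith [hφ xb hxb1 hxb2]
        · linarith
      have hfeas1 : A.mulVec (xb + s • x) = b := by
        funext i
        rw [Matrix.mulVec_add, Matrix.mulVec_smul]
        have : (A.mulVec xb + s • A.mulVec x) i = A.mulVec xb i + s * A.mulVec x i := rfl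
        rw [this, hA i, hxb1]
        ring
      have hfeas2 : ∀ i, C.mulVec (xb + s • x) i ≤ d i := by
        intro i
        rw [Matrix.mulVec_add, Matrix.mulVec_smul]
        have : (C.mulVec xb + s • C.mulVec x) i = C.mulVec xb i + s * C.mulVec x i := rfl
        rw [this]
        have h6 : C.mulVec x i ≤ 0 := by have := hC i; linarith
        nlinarith [hxb2 i]
      have h7 := hφ (xb + s • x) hfeas1 hfeas2
      rw [map_add, LinearMap.map_smul, smul_eq_mul] at h7
      have hne : φ x ≠ 0 := ne_of_lt hφx
      have h8 : s * φ x = -(φ xb - c + 1) := by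
        rw [hs, div_mul_eq_mul_div, mul_div_assoc, div_neg, div_self hne]
        ring
      rw [h8] at h7
      linarith
  obtain ⟨lam', hlam', hid⟩ := farkas g f hprem
  have hsplit : ∀ q : V, f q =
      (∑ i, lam' (Sum.inl (Sum.inl i)) * (A.mulVec q.1 i - q.2 * b i))
      - (∑ i, lam' (Sum.inl (Sum.inr i)) * (A.mulVec q.1 i - q.2 * b i))
      + ∑ i, lam' (Sum.inr (Sum.inl i)) * (C.mulVec q.1 i - q.2 * d i)
      - lam' (Sum.inr (Sum.inr ())) * q.2 := by
    intro q
    have e1 : ∑ i, lam' (Sum.inl (Sum.inl i)) * g (Sum.inl (Sum.inl i)) q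
        = ∑ i, lam' (Sum.inl (Sum.inl i)) * (A.mulVec q.1 i - q.2 * b i) := by
      apply Finset.sum_congr rfl; intro i _
      simp only [g, Sum.elim_inl, hrowA]
    have e2 : ∑ i, lam' (Sum.inl (Sum.inr i)) * g (Sum.inl (Sum.inr i)) q
        = ∑ i, -(lam' (Sum.inl (Sum.inr i)) * (A.mulVec q.1 i - q.2 * b i)) := by
      apply Finset.sum_congr rfl; intro i _
      simp only [g, Sum.elim_inl, Sum.elim_inr, LinearMap.neg_apply, hrowA]
      ring
    have e3 : ∑ i, lam' (Sum.inr (Sum.inl i)) * g (Sum.inr (Sum.inl i)) q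
        = ∑ i, lam' (Sum.inr (Sum.inl i)) * (C.mulVec q.1 i - q.2 * d i) := by
      apply Finset.sum_congr rfl; intro i _
      simp only [g, Sum.elim_inl, Sum.elim_inr, hrowC]
    have e4 : ∑ x : Unit, lam' (Sum.inr (Sum.inr x)) * g (Sum.inr (Sum.inr x)) q
        = -(lam' (Sum.inr (Sum.inr ())) * q.2) := by
      rw [Finset.sum_eq_single_of_mem () (Finset.mem_univ ())
        (by intro x _ hx; exact absurd rfl hx)]
      simp only [g, Sum.elim_inr, LinearMap.neg_apply]
      have : π₂ q = q.2 := rfl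
      rw [this]
      ring
    rw [hid q, Fintype.sum_sum_type, Fintype.sum_sum_type, Fintype.sum_sum_type,
      e1, e2, e3, e4, Finset.sum_neg_distrib]
    ring
  refine ⟨fun i => lam' (Sum.inr (Sum.inl i)),
    fun i => lam' (Sum.inl (Sum.inl i)) - lam' (Sum.inl (Sum.inr i)), ?_, ?_, ?_⟩
  · intro i; exact hlam' _
  · intro x
    have hval : c * 0 - φ x = ∑ i, lam' (Sum.inl (Sum.inl i)) * (A.mulVec x i - 0 * b i)
        - ∑ i, lam' (Sum.inl (Sum.inr i)) * (A.mulVec x i - 0 * b i)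
        + ∑ i, lam' (Sum.inr (Sum.inl i)) * (C.mulVec x i - 0 * d i)
        - lam' (Sum.inr (Sum.inr ())) * 0 := hsplit (x, 0)
    simp only [zero_mul, mul_zero, sub_zero, zero_sub] at hval
    have hd : (fun i => lam' (Sum.inl (Sum.inl i)) - lam' (Sum.inl (Sum.inr i))) ⬝ᵥ A.mulVec x
        = ∑ i, lam' (Sum.inl (Sum.inl i)) * A.mulVec x i
          - ∑ i, lam' (Sum.inl (Sum.inr i)) * A.mulVec x i := by
      simp only [dotProduct, sub_mul, Finset.sum_sub_distrib]
    rw [hd]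
    linarith [hval]
  · have hval : c * 1 - φ 0 = ∑ i, lam' (Sum.inl (Sum.inl i)) * (A.mulVec 0 i - 1 * b i)
        - ∑ i, lam' (Sum.inl (Sum.inr i)) * (A.mulVec 0 i - 1 * b i)
        + ∑ i, lam' (Sum.inr (Sum.inl i)) * (C.mulVec 0 i - 1 * d i)
        - lam' (Sum.inr (Sum.inr ())) * 1 := hsplit (0, 1)
    simp only [Matrix.mulVec_zero, Pi.zero_apply, map_zero, one_mul, mul_one, sub_zero,
      zero_sub, mul_neg] at hval
    have hd : (fun i => lam' (Sum.inl (Sum.inl i)) - lam' (Sum.inl (Sum.inr i))) ⬝ᵥ b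
        = ∑ i, lam' (Sum.inl (Sum.inl i)) * b i
          - ∑ i, lam' (Sum.inl (Sum.inr i)) * b i := by
      simp only [dotProduct, sub_mul, Finset.sum_sub_distrib]
    rw [hd]
    beta_reduce
    have hnu : 0 ≤ lam' (Sum.inr (Sum.inr ())) := hlam' _
    have e5 : ∑ i, -(lam' (Sum.inr (Sum.inl i)) * d i)
        = -∑ i, lam' (Sum.inr (Sum.inl i)) * d i := by
      rw [← Finset.sum_neg_distrib]
    have e6 : ∑ i, -(lam' (Sum.inl (Sum.inl i)) * b i)
        = -∑ i, lam' (Sum.inl (Sum.inl i)) * b i := by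
      rw [← Finset.sum_neg_distrib]
    have e7 : ∑ i, -(lam' (Sum.inl (Sum.inr i)) * b i)
        = -∑ i, lam' (Sum.inl (Sum.inr i)) * b i := by
      rw [← Finset.sum_neg_distrib]
    rw [e5] at hval; rw [e6] at hval; rw [e7] at hval
    linarith [hval]
theorem reduce_support {m p n : ℕ} (A : Matrix (Fin m) (Fin n) ℝ)
    (C : Matrix (Fin p) (Fin n) ℝ) (b : Fin m → ℝ) (d : Fin p → ℝ)
    (xb : Fin n → ℝ) (hxb1 : A.mulVec xb = b) (hxb2 : ∀ i, C.mulVec xb i ≤ d i)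
    (φ : (Fin n → ℝ) →ₗ[ℝ] ℝ) (c : ℝ) :
    ∀ (N : ℕ) (lam : Fin p → ℝ) (mu : Fin m → ℝ), (∀ i, 0 ≤ lam i) →
    (∀ x, φ x = -(mu ⬝ᵥ A.mulVec x) - ∑ i, lam i * C.mulVec x i) →
    (mu ⬝ᵥ b + ∑ i, lam i * d i ≤ -c) →
    (Finset.univ.filter (fun i => lam i ≠ 0)).card ≤ N →
    ∃ (lam2 : Fin p → ℝ) (mu2 : Fin m → ℝ) (z : Fin n → ℝ), (∀ i, 0 ≤ lam2 i) ∧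
      (∀ x, φ x = -(mu2 ⬝ᵥ A.mulVec x) - ∑ i, lam2 i * C.mulVec x i) ∧
      (mu2 ⬝ᵥ b + ∑ i, lam2 i * d i ≤ -c) ∧
      A.mulVec z = 0 ∧ (∀ i, lam2 i ≠ 0 → C.mulVec z i ≤ -1) := by
  classical
  intro N
  induction N with
  | zero =>
    intro lam mu hpos hidp hdual hcard
    refine ⟨lam, mu, 0, hpos, hidp, hdual, Matrix.mulVec_zero A, fun i hi => ?_⟩
    exfalso
    have : i ∈ Finset.univ.filter (fun i => lam i ≠ 0) := by
      simp [Finset.mem_filter, hi]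
    have := Finset.card_pos.mpr ⟨i, this⟩
    omega
  | succ N ih =>
    intro lam mu hpos hidp hdual hcard
    by_cases hsl : ∃ z, A.mulVec z = 0 ∧ ∀ i ∈ ({i | lam i ≠ 0} : Set (Fin p)), C.mulVec z i ≤ -1
    · obtain ⟨z, hz0, hz1⟩ := hsl
      exact ⟨lam, mu, z, hpos, hidp, hdual, hz0, fun i hi => hz1 i hi⟩
    · obtain ⟨lam', mu', hl'pos, hl'supp, hl'sum, hl'id⟩ :=
        cert_of_not_slater A C {i | lam i ≠ 0} hsl
      -- there is an index with lam' > 0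
      have hex : ∃ i, 0 < lam' i := by
        by_contra hno
        push_neg at hno
        have : ∑ i, lam' i = 0 :=
          Finset.sum_eq_zero (fun i _ => le_antisymm (hno i) (hl'pos i))
        rw [hl'sum] at this
        norm_num at this
      set F : Finset (Fin p) := Finset.univ.filter (fun i => 0 < lam' i) with hF
      have hFne : F.Nonempty := by
        obtain ⟨i, hi⟩ := hex
        exact ⟨i, by simp [hF, hi]⟩
      obtain ⟨istar, histar, hmin⟩ := Finset.exists_min_image F (fun i => lam i / lam' i) hFne
      have histar' : 0 < lam' istar := by
        have := histar
        simp [hF] at this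
        exact this
      set t : ℝ := lam istar / lam' istar with htdef
      have htnn : 0 ≤ t := div_nonneg (hpos istar) (le_of_lt histar')
      set lam2 : Fin p → ℝ := fun i => lam i - t * lam' i with hlam2
      set mu2 : Fin m → ℝ := fun i => mu i - t * mu' i with hmu2
      have hl2pos : ∀ i, 0 ≤ lam2 i := by
        intro i
        rcases eq_or_lt_of_le (hl'pos i) with h0 | hp
        · simp [hlam2, ← h0, hpos i]
        · have hiF : i ∈ F := by simp [hF, hp]
          have h1 : t ≤ lam i / lam' i := hmin i hiF
          rw [le_div_iff₀ hp] at h1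
          simp only [hlam2]
          linarith
      -- dot product expansions
      have hdot : ∀ (v : Fin m → ℝ), mu2 ⬝ᵥ v = mu ⬝ᵥ v - t * (mu' ⬝ᵥ v) := by
        intro v
        simp only [hmu2, dotProduct, Finset.mul_sum, sub_mul, Finset.sum_sub_distrib]
        congr 1
        apply Finset.sum_congr rfl
        intro i _
        ring
      have hsum2 : ∀ (v : Fin p → ℝ), ∑ i, lam2 i * v i
          = ∑ i, lam i * v i - t * ∑ i, lam' i * v i := by
        intro v
        simp only [hlam2, Finset.mul_sum, sub_mul, Finset.sum_sub_distrib]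
        congr 1
        apply Finset.sum_congr rfl
        intro i _
        ring
      -- certificate dual value nonneg
      have hcertnn : 0 ≤ mu' ⬝ᵥ b + ∑ i, lam' i * d i := by
        have h0 := hl'id xb
        rw [hxb1] at h0
        have h1 : ∑ i, lam' i * C.mulVec xb i ≤ ∑ i, lam' i * d i :=
          Finset.sum_le_sum (fun i _ => mul_le_mul_of_nonneg_left (hxb2 i) (hl'pos i))
        linarith
      -- new properties
      have hidp2 : ∀ x, φ x = -(mu2 ⬝ᵥ A.mulVec x) - ∑ i, lam2 i * C.mulVec x i := by
        intro x
        rw [hdot, hsum2]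
        have := hl'id x
        have h2 := hidp x
        nlinarith [this, h2]
      have hdual2 : mu2 ⬝ᵥ b + ∑ i, lam2 i * d i ≤ -c := by
        rw [hdot, hsum2]
        nlinarith [hcertnn, htnn, hdual]
      -- cardinality decrease
      have histar0 : lam2 istar = 0 := by
        simp only [hlam2, htdef]
        rw [div_mul_cancel₀ _ (ne_of_gt histar')]
        ring
      have hsupp2 : Finset.univ.filter (fun i => lam2 i ≠ 0)
          ⊆ (Finset.univ.filter (fun i => lam i ≠ 0)).erase istar := by
        intro i hi
        simp only [Finset.mem_filter, Finset.mem_univ, true_and] at hi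
        rw [Finset.mem_erase]
        constructor
        · rintro rfl; exact hi histar0
        · simp only [Finset.mem_filter, Finset.mem_univ, true_and]
          intro hlz
          apply hi
          have : lam' i = 0 := hl'supp i (by simp [hlz])
          simp [hlam2, hlz, this]
      have histar_mem : istar ∈ Finset.univ.filter (fun i => lam i ≠ 0) := by
        simp only [Finset.mem_filter, Finset.mem_univ, true_and]
        intro hz
        have : lam' istar = 0 := hl'supp istar (by simp [hz])
        rw [this] at histar'
        exact lt_irrefl 0 histar'
      have hcard2 : (Finset.univ.filter (fun i => lam2 i ≠ 0)).card ≤ N := by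
        have h1 := Finset.card_le_card hsupp2
        rw [Finset.card_erase_of_mem histar_mem] at h1
        omega
      exact ih lam2 mu2 hl2pos hidp2 hdual2 hcard2

/-- Proposition 7, bound part: with easy equations; for all
`b, d` with `{x : Ax = b, Cx ≤ d} ≠ ∅` and all `u` with `Au = b`,
`dist(u, {x : Ax = b, Cx ≤ d}) ≤ H·dist(d, Cu + ℝ^p_+) ≤ H·‖(Cu − d)_+‖`. -/
theorem hoffman_easy_eq {m p n : ℕ} (A : Matrix (Fin m) (Fin n) ℝ)
    (C : Matrix (Fin p) (Fin n) ℝ) (b : Fin m → ℝ) (d : Fin p → ℝ)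
    (hP : {x : Fin n → ℝ | A.mulVec x = b ∧ ∀ i, C.mulVec x i ≤ d i}.Nonempty)
    (u : Fin n → ℝ) (hu : A.mulVec u = b) :
    infDist u {x : Fin n → ℝ | A.mulVec x = b ∧ ∀ i, C.mulVec x i ≤ d i} ≤
      HoffEq A C * infDist d
        {w : Fin p → ℝ | ∃ s : Fin p → ℝ, (∀ i, 0 ≤ s i) ∧ w = C.mulVec u + s} ∧
    HoffEq A C * infDist d
        {w : Fin p → ℝ | ∃ s : Fin p → ℝ, (∀ i, 0 ≤ s i) ∧ w = C.mulVec u + s} ≤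
      HoffEq A C * ‖(fun i => max (C.mulVec u i - d i) 0 : Fin p → ℝ)‖ := by
  classical
  set P : Set (Fin n → ℝ) := {x | A.mulVec x = b ∧ ∀ i, C.mulVec x i ≤ d i} with hPdef
  set Su : Set (Fin p → ℝ) := {w | ∃ s : Fin p → ℝ, (∀ i, 0 ≤ s i) ∧ w = C.mulVec u + s}
    with hSudef
  have hSueq : Su = {w : Fin p → ℝ | ∀ i, C.mulVec u i ≤ w i} := by
    ext w
    constructor
    · rintro ⟨s, hs, rfl⟩ i
      simpa using hs i
    · intro hw
      refine ⟨fun i => w i - C.mulVec u i, fun i => by simpa using hw i, ?_⟩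
      funext i
      simp
  -- HoffEq nonnegative
  have hrel0 : RelSurjAC A C (∅ : Set (Fin p)) :=
    relSurj_of_slater A C ∅ 0 (Matrix.mulVec_zero A)
      (fun i hi => absurd hi (Set.notMem_empty i))
  have hHJ0 : HJeq A C (∅ : Set (Fin p)) = 0 := by
    unfold HJeq
    have hinner : ∀ w : Fin p → ℝ,
        sInf {r | ∃ x : Fin n → ℝ, A.mulVec x = 0 ∧
          (∀ i ∈ (∅ : Set (Fin p)), C.mulVec x i ≤ w i) ∧ r = ‖x‖} = 0 := by
      intro w
      apply le_antisymm
      · apply csInf_le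
        · exact ⟨0, by rintro r ⟨x, _, _, rfl⟩; exact norm_nonneg x⟩
        · exact ⟨0, Matrix.mulVec_zero A, fun i hi => absurd hi (Set.notMem_empty i),
            (norm_zero).symm⟩
      · apply le_csInf
        · exact ⟨‖(0 : Fin n → ℝ)‖, 0, Matrix.mulVec_zero A,
            fun i hi => absurd hi (Set.notMem_empty i), rfl⟩
        · rintro r ⟨x, _, _, rfl⟩; exact norm_nonneg x
    have hset : {t | ∃ w : Fin p → ℝ, ‖w‖ ≤ 1 ∧
        t = sInf {r | ∃ x : Fin n → ℝ, A.mulVec x = 0 ∧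
          (∀ i ∈ (∅ : Set (Fin p)), C.mulVec x i ≤ w i) ∧ r = ‖x‖}} = {(0 : ℝ)} := by
      ext t
      constructor
      · rintro ⟨w, _, rfl⟩
        rw [Set.mem_singleton_iff]
        exact hinner w
      · rintro rfl
        exact ⟨0, by simp, (hinner 0).symm⟩
    rw [hset]
    exact csSup_singleton 0
  have hfinHoff : ({t | ∃ J : Set (Fin p), RelSurjAC A C J ∧ t = HJeq A C J} : Set ℝ).Finite := by
    apply (Set.finite_range (fun J : Set (Fin p) => HJeq A C J)).subset
    rintro t ⟨J, _, rfl⟩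
    exact ⟨J, rfl⟩
  have Hnn : 0 ≤ HoffEq A C := by
    have := le_csSup hfinHoff.bddAbove (show (0:ℝ) ∈ _ from ⟨∅, hrel0, hHJ0.symm⟩)
    exact this
  -- second inequality
  have hDle : infDist d Su ≤ ‖(fun i => max (C.mulVec u i - d i) 0 : Fin p → ℝ)‖ := by
    have hmem : (C.mulVec u + fun i => max (C.mulVec u i - d i) 0 - (C.mulVec u i - d i)) ∈ Su := by
      refine ⟨fun i => max (C.mulVec u i - d i) 0 - (C.mulVec u i - d i), fun i => ?_, rfl⟩
      simp only [sub_nonneg, le_max_iff]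
      left; rfl
    refine le_trans (infDist_le_dist_of_mem hmem) (le_of_eq ?_)
    rw [dist_eq_norm]
    have : d - (C.mulVec u + fun i => max (C.mulVec u i - d i) 0 - (C.mulVec u i - d i))
        = -(fun i => max (C.mulVec u i - d i) 0 : Fin p → ℝ) := by
      funext i
      simp only [Pi.sub_apply, Pi.add_apply, Pi.neg_apply]
      ring
    rw [this, norm_neg]
  refine ⟨?_, mul_le_mul_of_nonneg_left hDle Hnn⟩
  -- main inequality
  by_cases hdel : infDist u P ≤ 0
  · exact le_trans hdel (mul_nonneg Hnn infDist_nonneg)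
  push_neg at hdel
  obtain ⟨xb, hxb⟩ := hP
  have hxb1 : A.mulVec xb = b := hxb.1
  have hxb2 : ∀ i, C.mulVec xb i ≤ d i := hxb.2
  -- P closed and convex
  have hcA : Continuous (fun x : Fin n → ℝ => A.mulVec x) := by
    have h := LinearMap.continuous_of_finiteDimensional (A.mulVecLin)
    exact h.congr (fun x => by rw [Matrix.mulVecLin_apply])
  have hcC : Continuous (fun x : Fin n → ℝ => C.mulVec x) := by
    have h := LinearMap.continuous_of_finiteDimensional (C.mulVecLin)
    exact h.congr (fun x => by rw [Matrix.mulVecLin_apply])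
  have hPclosed : IsClosed P := by
    have : P = {x | A.mulVec x = b} ∩ ⋂ i, {x | C.mulVec x i ≤ d i} := by
      ext x
      simp [hPdef, Set.mem_iInter]
    rw [this]
    exact (isClosed_eq hcA continuous_const).inter
      (isClosed_iInter (fun i => isClosed_le ((continuous_apply i).comp hcC) continuous_const))
  have hPconv : Convex ℝ P := by
    rintro x ⟨hx1, hx2⟩ y ⟨hy1, hy2⟩ a a' ha ha' haa
    constructor
    · rw [Matrix.mulVec_add, Matrix.mulVec_smul, Matrix.mulVec_smul, hx1, hy1]
      funext i
      simp only [Pi.add_apply, Pi.smul_apply, smul_eq_mul]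
      rw [← add_mul, haa, one_mul]
    · intro i
      rw [Matrix.mulVec_add, Matrix.mulVec_smul, Matrix.mulVec_smul]
      have e1 : (a • C.mulVec x + a' • C.mulVec y) i = a * C.mulVec x i + a' * C.mulVec y i := rfl
      rw [e1]
      have e2 : a * d i + a' * d i = d i := by rw [← add_mul, haa, one_mul]
      have e3 := mul_le_mul_of_nonneg_left (hx2 i) ha
      have e4 := mul_le_mul_of_nonneg_left (hy2 i) ha'
      linarith
  -- Su closed nonempty, D > 0
  have hSclosed : IsClosed Su := by
    rw [hSueq]
    have : {w : Fin p → ℝ | ∀ i, C.mulVec u i ≤ w i} = ⋂ i, {w : Fin p → ℝ | C.mulVec u i ≤ w i} := by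
      ext w; simp [Set.mem_iInter]
    rw [this]
    exact isClosed_iInter (fun i => isClosed_le continuous_const (continuous_apply i))
  have hSne : Su.Nonempty := ⟨C.mulVec u, by rw [hSueq]; intro i; exact le_rfl⟩
  set D : ℝ := infDist d Su with hDdef
  have hDnn : 0 ≤ D := infDist_nonneg
  have hDpos : 0 < D := by
    rcases lt_or_eq_of_le hDnn with h | h
    · exact h
    exfalso
    have hdmem : d ∈ Su := (hSclosed.mem_iff_infDist_zero hSne).mpr h.symm
    rw [hSueq] at hdmem
    have hup : u ∈ P := ⟨hu, hdmem⟩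
    have : infDist u P = 0 := (hPclosed.mem_iff_infDist_zero ⟨u, hup⟩).mp hup
    rw [this] at hdel
    exact lt_irrefl 0 hdel
  obtain ⟨v, hvmem, hvdist⟩ := hSclosed.exists_infDist_eq_dist hSne d
  have hvge : ∀ i, C.mulVec u i ≤ v i := by
    rw [hSueq] at hvmem
    exact hvmem
  set w : Fin p → ℝ := D⁻¹ • (d - v) with hwdef
  have hwnorm : ‖w‖ ≤ 1 := by
    rw [hwdef, norm_smul]
    have : ‖d - v‖ = D := by rw [← dist_eq_norm]; exact hvdist.symm
    rw [this, Real.norm_eq_abs, abs_of_pos (inv_pos.mpr hDpos), inv_mul_cancel₀ (ne_of_gt hDpos)]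
  have hkey : ∀ i, D * w i ≤ d i - C.mulVec u i := by
    intro i
    have e1 : w i = D⁻¹ * (d i - v i) := rfl
    rw [e1, ← mul_assoc, mul_inv_cancel₀ (ne_of_gt hDpos), one_mul]
    have := hvge i
    linarith
  -- separation
  have hdisj : Disjoint (ball u (infDist u P)) P := by
    rw [Set.disjoint_left]
    intro x hx hxP
    have h1 : infDist u P ≤ dist u x := infDist_le_dist_of_mem hxP
    rw [mem_ball] at hx
    rw [dist_comm] at h1
    exact absurd hx (not_lt.mpr h1)
  obtain ⟨f, c, hball, hPf⟩ := geometric_hahn_banach_open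
    (convex_ball u (infDist u P)) isOpen_ball hPconv hdisj
  -- dual certificate and support reduction
  obtain ⟨lam0, mu0, hpos0, hid0, hdual0⟩ := dual_cert A C b d xb hxb1 hxb2
    (f.toLinearMap) c (fun x h1 h2 => hPf x ⟨h1, h2⟩)
  obtain ⟨lam, mu, z, hpos, hid, hdual, hz0, hz1⟩ := reduce_support A C b d xb hxb1 hxb2
    (f.toLinearMap) c (Finset.univ.filter (fun i => lam0 i ≠ 0)).card lam0 mu0
    hpos0 hid0 hdual0 le_rfl
  set J : Set (Fin p) := {i | lam i ≠ 0} with hJdef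
  have hslater : ∀ i ∈ J, C.mulVec z i ≤ -1 := fun i hi => hz1 i hi
  have hrelJ : RelSurjAC A C J := relSurj_of_slater A C J z hz0 hslater
  set Rset : (Fin p → ℝ) → Set ℝ := fun w' => {r | ∃ x : Fin n → ℝ, A.mulVec x = 0 ∧
    (∀ i ∈ J, C.mulVec x i ≤ w' i) ∧ r = ‖x‖} with hRdef
  have hbddb : ∀ w', BddBelow (Rset w') := by
    intro w'
    exact ⟨0, by rintro r ⟨x, _, _, rfl⟩; exact norm_nonneg x⟩
  have hRmem : ∀ w' : Fin p → ℝ, (‖‖w'‖ • z‖ : ℝ) ∈ Rset w' := by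
    intro w'
    refine ⟨‖w'‖ • z, ?_, ?_, rfl⟩
    · rw [Matrix.mulVec_smul, hz0, smul_zero]
    · intro i hi
      rw [Matrix.mulVec_smul]
      have e1 : (‖w'‖ • C.mulVec z) i = ‖w'‖ * C.mulVec z i := rfl
      rw [e1]
      have h1 : ‖w'‖ * C.mulVec z i ≤ ‖w'‖ * (-1) :=
        mul_le_mul_of_nonneg_left (hslater i hi) (norm_nonneg w')
      have h2 : |w' i| ≤ ‖w'‖ := by
        have := norm_le_pi_norm w' i
        simpa [Real.norm_eq_abs] using this
      have h3 : -(|w' i|) ≤ w' i := neg_abs_le _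
      linarith
  have hRne : ∀ w', (Rset w').Nonempty := fun w' => ⟨_, hRmem w'⟩
  -- key step
  have hstep : ∀ r ∈ Rset w, infDist u P ≤ D * r := by
    rintro r ⟨x, hx0, hxJ, rfl⟩
    set q : Fin n → ℝ := u + D • x with hqdef
    have hq1 : A.mulVec q = b := by
      rw [hqdef, Matrix.mulVec_add, Matrix.mulVec_smul, hu, hx0, smul_zero, add_zero]
    have hqC : ∀ i, C.mulVec q i = C.mulVec u i + D * C.mulVec x i := by
      intro i
      rw [hqdef, Matrix.mulVec_add, Matrix.mulVec_smul]
      rfl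
    have hqJ : ∀ i ∈ J, C.mulVec q i ≤ d i := by
      intro i hi
      rw [hqC i]
      have h1 : D * C.mulVec x i ≤ D * w i :=
        mul_le_mul_of_nonneg_left (hxJ i hi) hDnn
      have h2 := hkey i
      linarith
    have hfq : c ≤ f q := by
      have hidq := hid q
      have hsum : ∑ i, lam i * C.mulVec q i ≤ ∑ i, lam i * d i := by
        apply Finset.sum_le_sum
        intro i _
        by_cases hli : lam i = 0
        · simp [hli]
        · exact mul_le_mul_of_nonneg_left (hqJ i hli) (hpos i)
      have e1 : f.toLinearMap q = f q := rfl
      rw [e1, hq1] at hidq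
      linarith [hidq, hdual, hsum]
    have hqout : q ∉ ball u (infDist u P) := by
      intro hq
      exact absurd (hball q hq) (not_lt.mpr hfq)
    rw [mem_ball] at hqout
    push_neg at hqout
    have e2 : dist q u = D * ‖x‖ := by
      rw [hqdef, dist_eq_norm, add_sub_cancel_left, norm_smul, Real.norm_eq_abs,
        abs_of_pos hDpos]
    rw [e2] at hqout
    exact hqout
  -- combine
  have hIle : infDist u P ≤ D * sInf (Rset w) := by
    have h1 : infDist u P / D ≤ sInf (Rset w) := by
      apply le_csInf (hRne w)
      intro r hr
      rw [div_le_iff₀ hDpos]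
      have := hstep r hr
      linarith [this]
    calc infDist u P = D * (infDist u P / D) := by
          field_simp
      _ ≤ D * sInf (Rset w) := mul_le_mul_of_nonneg_left h1 hDnn
  have hIJ : sInf (Rset w) ≤ HJeq A C J := by
    apply le_csSup
    · refine ⟨‖z‖, ?_⟩
      rintro t ⟨w', hw', rfl⟩
      apply csInf_le_of_le (hbddb w') (hRmem w')
      rw [norm_smul, Real.norm_eq_abs, abs_of_nonneg (norm_nonneg w')]
      nlinarith [norm_nonneg z, norm_nonneg w', hw']
    · exact ⟨w, hwnorm, rfl⟩
  have hJH : HJeq A C J ≤ HoffEq A C := le_csSup hfinHoff.bddAbove ⟨J, hrelJ, rfl⟩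
  have hInn : 0 ≤ sInf (Rset w) := le_csInf (hRne w) (by rintro r ⟨x, _, _, rfl⟩; exact norm_nonneg x)
  calc infDist u P ≤ D * sInf (Rset w) := hIle
    _ ≤ D * HJeq A C J := mul_le_mul_of_nonneg_left hIJ hDnn
    _ ≤ D * HoffEq A C := mul_le_mul_of_nonneg_left hJH hDnn
    _ = HoffEq A C * D := mul_comm _ _
end

section
/- A closed sublinear set-valued mapping Φ : ℝ^n ⇉ ℝ^m (one whose graph is a nonempty closed convex cone) is surjective (Φ(ℝ^n) = ℝ^m) if and only if the only v ∈ ℝ^m with (0,v) ∈ graph(Φ)* is v = 0, where graph(Φ)* := {(u,v) ∈ ℝ^n×ℝ^m : ⟨u,x⟩ + ⟨v,y⟩ ≥ 0 for all (x,y) ∈ graph(Φ)} is the dual cone of graph(Φ). -/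
/-!
STATEMENT 19: a closed sublinear set-valued mapping `Φ : ℝ^n ⇉ ℝ^m` (one whose
graph is a nonempty closed convex cone) is surjective iff the only `v` with
`(0, v) ∈ graph(Φ)*` is `v = 0`.  The dual-cone membership `(0,v) ∈ graph(Φ)*`
unfolds to `⟨0,x⟩ + ⟨v,y⟩ ≥ 0` for all `(x,y)` in the graph, i.e.
`0 ≤ ∑ i, v i * y i` whenever `y ∈ Φ x`.
-/

theorem closed_sublinear_surjective_iff {n m : ℕ}
    (Φ : (Fin n → ℝ) → Set (Fin m → ℝ))
    (hne : {p : (Fin n → ℝ) × (Fin m → ℝ) | p.2 ∈ Φ p.1}.Nonempty)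
    (hclosed : IsClosed {p : (Fin n → ℝ) × (Fin m → ℝ) | p.2 ∈ Φ p.1})
    (hconv : Convex ℝ {p : (Fin n → ℝ) × (Fin m → ℝ) | p.2 ∈ Φ p.1})
    (hcone : ∀ c : ℝ, 0 < c → ∀ p ∈ {p : (Fin n → ℝ) × (Fin m → ℝ) | p.2 ∈ Φ p.1},
      c • p ∈ {p : (Fin n → ℝ) × (Fin m → ℝ) | p.2 ∈ Φ p.1}) :
    (∀ y : Fin m → ℝ, ∃ x : Fin n → ℝ, y ∈ Φ x) ↔
      (∀ v : Fin m → ℝ,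
        (∀ x y, y ∈ Φ x → 0 ≤ (∑ i, (0 : ℝ) * x i) + ∑ i, v i * y i) → v = 0) := by
  constructor
  · intro hsurj v hv
    obtain ⟨x, hx⟩ := hsurj (-v)
    have h := hv x (-v) hx
    simp only [zero_mul, Finset.sum_const_zero, zero_add] at h
    have h2 : ∑ i, v i * (-v) i = -∑ i, v i * v i := by
      simp [Finset.sum_neg_distrib, mul_neg]
    rw [h2] at h
    have h3 : ∑ i, v i * v i ≤ 0 := by linarith
    funext i
    have h4 : ∀ j ∈ Finset.univ, (0:ℝ) ≤ v j * v j := fun j _ => mul_self_nonneg _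
    have h5 : v i * v i = 0 := by
      have := Finset.sum_eq_zero_iff_of_nonneg h4 |>.mp (le_antisymm h3 (Finset.sum_nonneg h4))
      exact this i (Finset.mem_univ i)
    have := mul_self_eq_zero.mp h5
    simpa using this
  · intro hdual
    set S : Set (Fin m → ℝ) := {y | ∃ x, y ∈ Φ x} with hS
    have hSconv : Convex ℝ S := by
      rintro y₁ ⟨x₁, h1⟩ y₂ ⟨x₂, h2⟩ a b ha hb hab
      have h := hconv (show ((x₁, y₁) : _ × _) ∈ _ from h1)
        (show ((x₂, y₂) : _ × _) ∈ _ from h2) ha hb hab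
      exact ⟨a • x₁ + b • x₂, h⟩
    have hScone : ∀ c : ℝ, 0 < c → ∀ y ∈ S, c • y ∈ S := by
      rintro c hc y ⟨x, hx⟩
      exact ⟨c • x, hcone c hc (x, y) hx⟩
    have hSne : S.Nonempty := ⟨hne.choose.2, hne.choose.1, hne.choose_spec⟩
    -- 0 ∈ closure S
    have h0 : (0 : Fin m → ℝ) ∈ closure S := by
      obtain ⟨y, hy⟩ := hSne
      have : Filter.Tendsto (fun t : ℝ => t • y) (nhdsWithin 0 (Set.Ioi 0)) (nhds 0) := by
        have : Filter.Tendsto (fun t : ℝ => t • y) (nhds 0) (nhds ((0:ℝ) • y)) :=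
          (continuous_id.smul continuous_const).tendsto 0
        rw [zero_smul] at this
        exact this.mono_left nhdsWithin_le_nhds
      refine mem_closure_of_tendsto this ?_
      filter_upwards [self_mem_nhdsWithin] with t ht
      exact hScone t ht y hy
    -- closure S = univ
    have hdense : closure S = Set.univ := by
      by_contra hcl
      obtain ⟨y₀, hy₀⟩ : ∃ y₀, y₀ ∉ closure S := by
        by_contra h
        push_neg at h
        exact hcl (Set.eq_univ_of_forall h)
      obtain ⟨f, u, hfu, hfy₀⟩ := geometric_hahn_banach_closed_point
        (hSconv.closure) isClosed_closure hy₀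
      have hu : 0 < u := by simpa using hfu 0 h0
      have hfle : ∀ y ∈ S, f y ≤ 0 := by
        intro y hy
        by_contra hpos
        push_neg at hpos
        have ht : (0:ℝ) < 2 * u / f y := by positivity
        have := hfu ((2 * u / f y) • y) (subset_closure (hScone _ ht y hy))
        rw [map_smul] at this
        rw [smul_eq_mul, div_mul_cancel₀ _ (ne_of_gt hpos)] at this
        linarith
      have hrep : ∀ y : Fin m → ℝ, f y = ∑ i, y i * f (Pi.single i 1) := by
        intro y
        have hy : y = ∑ i, y i • (Pi.single i 1 : Fin m → ℝ) := by
          funext j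
          simp [Finset.sum_apply, Pi.single_apply, mul_comm]
        conv_lhs => rw [hy]
        rw [map_sum]
        simp [map_smul]
      set v : Fin m → ℝ := fun i => -f (Pi.single i 1) with hvdef
      have hv0 : v = 0 := by
        apply hdual
        intro x y hy
        have : f y ≤ 0 := hfle y ⟨x, hy⟩
        have hsum : ∑ i, v i * y i = -f y := by
          rw [hrep y]
          simp [hvdef, Finset.sum_neg_distrib, mul_comm]
        simp only [zero_mul, Finset.sum_const_zero, zero_add, hsum]
        linarith
      have hf0 : f y₀ = 0 := by
        rw [hrep y₀]
        apply Finset.sum_eq_zero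
        intro i _
        have : v i = 0 := by rw [hv0]; rfl
        have : f (Pi.single i 1) = 0 := by
          simpa [hvdef, neg_eq_zero] using this
        simp [this]
      linarith
    -- convex dense implies univ
    have hspan : affineSpan ℝ S = ⊤ := by
      have hclosedspan : IsClosed ((affineSpan ℝ S : AffineSubspace ℝ (Fin m → ℝ)) : Set (Fin m → ℝ)) :=
        (affineSpan ℝ S).closed_of_finiteDimensional
      have : closure S ⊆ (affineSpan ℝ S : Set (Fin m → ℝ)) :=
        closure_minimal (subset_affineSpan ℝ S) hclosedspan
      rw [hdense] at this
      exact eq_top_iff.mpr fun p _ => this (Set.mem_univ p)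
    obtain ⟨x₀, hx₀⟩ := hSconv.interior_nonempty_iff_affineSpan_eq_top.mpr hspan
    intro z
    have hz : z ∈ interior S := by
      have hy : (2:ℝ) • z - x₀ ∈ closure S := by rw [hdense]; trivial
      have := hSconv.combo_interior_closure_mem_interior hx₀ hy
        (by norm_num : (0:ℝ) < 1/2) (by norm_num : (0:ℝ) ≤ 1/2) (by norm_num)
      have heq : (1/2 : ℝ) • x₀ + (1/2 : ℝ) • ((2:ℝ) • z - x₀) = z := by
        funext j; simp [Pi.smul_apply, smul_eq_mul]; ring
      rwa [heq] at this
    have hzS : z ∈ S := interior_subset hz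
    exact hzS
end
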